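/- arXiv:1610.07100 — 4 statements merged into one kernel-verified Lean document; each statement's English description precedes it below -/
import Mathlib

section
/- There exists a constant C > 0 such that the following holds. Let σ_1, …, σ_m be independent random variables, each uniform on {−1, +1}, let a_1, …, a_m be real numbers, and let Σ = ∑_{i=1}^m a_i σ_i. Suppose there are at least n indices i with |a_i| ≥ a_min for some a_min > 0 with a_min ≤ δ. Then for every real h, Pr(|Σ + h| ≤ δ) ≤ C·(δ/a_min)/√n. -/
open Finset
open scoped Classical

lemma centralBinom_le_real (n : ℕ) :
    (Nat.centralBinom n : ℝ) ≤ 4 ^ n / Real.sqrt (n + 1) := by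
  induction n with
  | zero => norm_num [Nat.centralBinom_zero]
  | succ n ih =>
    push_cast
    have hs1 : (0:ℝ) < Real.sqrt ((n:ℝ)+1) := Real.sqrt_pos.2 (by positivity)
    have hs2 : (0:ℝ) < Real.sqrt ((n:ℝ)+1+1) := Real.sqrt_pos.2 (by positivity)
    have hrec : ((n:ℝ)+1) * (Nat.centralBinom (n+1) : ℝ)
        = 2*(2*(n:ℝ)+1) * (Nat.centralBinom n : ℝ) := by
      have := Nat.succ_mul_centralBinom_succ n
      have := congrArg (fun x : ℕ => (x : ℝ)) this
      push_cast at this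
      linarith
    have key : (2*(2*(n:ℝ)+1)) * Real.sqrt ((n:ℝ)+1+1) ≤ (4*((n:ℝ)+1)) * Real.sqrt ((n:ℝ)+1) := by
      have h1 : (2*(2*(n:ℝ)+1)) * Real.sqrt ((n:ℝ)+1+1)
          = Real.sqrt ((2*(2*(n:ℝ)+1))^2 * ((n:ℝ)+1+1)) := by
        rw [Real.sqrt_mul (by positivity), Real.sqrt_sq (by positivity)]
      have h2 : (4*((n:ℝ)+1)) * Real.sqrt ((n:ℝ)+1)
          = Real.sqrt ((4*((n:ℝ)+1))^2 * ((n:ℝ)+1)) := by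
        rw [Real.sqrt_mul (by positivity), Real.sqrt_sq (by positivity)]
      rw [h1, h2]
      apply Real.sqrt_le_sqrt
      nlinarith [sq_nonneg (n:ℝ), (Nat.cast_nonneg n : (0:ℝ) ≤ n)]
    rw [le_div_iff₀ hs2]
    have hpos : (0:ℝ) < (n:ℝ)+1 := by positivity
    rw [← mul_le_mul_iff_right₀ hpos]
    calc ((n:ℝ)+1) * ((Nat.centralBinom (n+1) : ℝ) * Real.sqrt ((n:ℝ)+1+1))
        = (2*(2*(n:ℝ)+1)) * Real.sqrt ((n:ℝ)+1+1) * (Nat.centralBinom n : ℝ) := by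
          rw [← mul_assoc, hrec]; ring
      _ ≤ (2*(2*(n:ℝ)+1)) * Real.sqrt ((n:ℝ)+1+1) * (4^n / Real.sqrt ((n:ℝ)+1)) := by
          apply mul_le_mul_of_nonneg_left ih (by positivity)
      _ ≤ (4*((n:ℝ)+1)) * Real.sqrt ((n:ℝ)+1) * (4^n / Real.sqrt ((n:ℝ)+1)) := by
          apply mul_le_mul_of_nonneg_right key (by positivity)
      _ = ((n:ℝ)+1) * 4^(n+1) := by
          field_simp; ring

lemma choose_half_le (k : ℕ) (hk : 1 ≤ k) :
    (k.choose (k / 2) : ℝ) ≤ Real.sqrt 2 * 2 ^ k / Real.sqrt k := by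
  have hsk : (0:ℝ) < Real.sqrt k := Real.sqrt_pos.2 (by exact_mod_cast hk)
  rw [le_div_iff₀ hsk]
  rcases Nat.even_or_odd k with ⟨j, rfl⟩ | ⟨j, rfl⟩
  · -- k = j + j
    have hj : 1 ≤ j := by omega
    have h1 : (j + j) / 2 = j := by omega
    have h2 : j + j = 2 * j := by omega
    rw [h1, h2, ← Nat.centralBinom]
    have hb := centralBinom_le_real j
    have hs : Real.sqrt ((2 * j : ℕ) : ℝ) ≤ Real.sqrt 2 * Real.sqrt ((j:ℝ) + 1) := by
      rw [← Real.sqrt_mul (by norm_num)]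
      apply Real.sqrt_le_sqrt
      push_cast; linarith
    have hsn : (0:ℝ) ≤ Real.sqrt ((2 * j : ℕ) : ℝ) := Real.sqrt_nonneg _
    have hs1 : (0:ℝ) < Real.sqrt ((j:ℝ) + 1) := Real.sqrt_pos.2 (by positivity)
    calc ((2*j).choose j : ℝ) * Real.sqrt ((2 * j : ℕ) : ℝ)
        ≤ (4 ^ j / Real.sqrt ((j:ℝ) + 1)) * (Real.sqrt 2 * Real.sqrt ((j:ℝ) + 1)) := by
          apply mul_le_mul hb hs hsn (by positivity)
      _ = Real.sqrt 2 * 4 ^ j := by field_simp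
      _ = Real.sqrt 2 * 2 ^ (2 * j) := by rw [pow_mul]; norm_num
  · -- k = 2 * j + 1
    have h1 : (2 * j + 1) / 2 = j := by omega
    rw [h1]
    have hdouble : 2 * (2 * j + 1).choose j = Nat.centralBinom (j + 1) := by
      have hsymm : (2 * j + 1).choose (j + 1) = (2 * j + 1).choose j := by
        have he : 2 * j + 1 - j = j + 1 := by omega
        rw [← he]
        exact Nat.choose_symm (by omega)
      have : Nat.centralBinom (j + 1) = (2 * j + 1).choose j + (2 * j + 1).choose (j + 1) := by
        rw [Nat.centralBinom]
        have : 2 * (j + 1) = (2 * j + 1) + 1 := by ring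
        rw [this, Nat.choose_succ_succ']
      omega
    have hb := centralBinom_le_real (j + 1)
    have hs : Real.sqrt ((2 * j + 1 : ℕ) : ℝ) ≤ Real.sqrt 2 * Real.sqrt ((j:ℝ) + 1 + 1) := by
      rw [← Real.sqrt_mul (by norm_num)]
      apply Real.sqrt_le_sqrt
      push_cast; linarith
    have hsn : (0:ℝ) ≤ Real.sqrt ((2 * j + 1 : ℕ) : ℝ) := Real.sqrt_nonneg _
    have hs1 : (0:ℝ) < Real.sqrt ((j:ℝ) + 1 + 1) := Real.sqrt_pos.2 (by positivity)
    have hc : ((2 * j + 1).choose j : ℝ) = (Nat.centralBinom (j + 1) : ℝ) / 2 := by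
      have := congrArg (fun x : ℕ => (x : ℝ)) hdouble
      push_cast at this
      linarith
    have hbc : (Nat.centralBinom (j+1) : ℝ) ≤ 4 ^ (j+1) / Real.sqrt ((j:ℝ) + 1 + 1) := by
      have : (((j:ℕ)+1 : ℕ) : ℝ) + 1 = (j:ℝ) + 1 + 1 := by push_cast; ring
      rw [← this]; exact_mod_cast hb
    calc ((2 * j + 1).choose j : ℝ) * Real.sqrt ((2 * j + 1 : ℕ) : ℝ)
        = (Nat.centralBinom (j + 1) : ℝ) / 2 * Real.sqrt ((2 * j + 1 : ℕ) : ℝ) := by rw [hc]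
      _ ≤ (4 ^ (j+1) / Real.sqrt ((j:ℝ) + 1 + 1)) / 2 * (Real.sqrt 2 * Real.sqrt ((j:ℝ) + 1 + 1)) := by
          apply mul_le_mul (by linarith [hbc]) hs hsn (by positivity)
      _ = Real.sqrt 2 * (4 ^ (j+1) / 2) := by field_simp
      _ = Real.sqrt 2 * 2 ^ (2 * j + 1) := by
          congr 1
          have h4 : (4:ℝ) ^ j = 2 ^ (2 * j) := by
            rw [(by norm_num : (4:ℝ) = 2 ^ 2), ← pow_mul]
          rw [pow_succ, h4, pow_succ]
          ring

lemma count_Ico {ι : Type*} [Fintype ι] [DecidableEq ι] (a : ι → ℝ) (r : ℝ) (hr : 0 < r)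
    (ha : ∀ i, r ≤ a i) (y : ℝ) :
    ((univ : Finset (Finset ι)).filter
        (fun t => ∑ i ∈ t, a i ∈ Set.Ico y (y + r))).card
      ≤ (Fintype.card ι).choose (Fintype.card ι / 2) := by
  apply IsAntichain.sperner
  intro u hu v hv huv hsub
  simp only [coe_filter, Set.mem_setOf_eq, mem_univ, true_and, Set.mem_Ico] at hu hv
  have hne : (v \ u).Nonempty := by
    rw [sdiff_nonempty]
    intro hvu
    exact huv (Finset.Subset.antisymm hsub hvu)
  have hsum : ∑ i ∈ v \ u, a i + ∑ i ∈ u, a i = ∑ i ∈ v, a i := Finset.sum_sdiff hsub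
  have hge : r ≤ ∑ i ∈ v \ u, a i := by
    calc r = 1 * r := (one_mul r).symm
      _ ≤ (v \ u).card * r := by
          apply mul_le_mul_of_nonneg_right _ hr.le
          exact_mod_cast Nat.one_le_iff_ne_zero.2 (Finset.card_ne_zero_of_mem hne.choose_spec)
      _ ≤ ∑ i ∈ v \ u, a i := by
          rw [mul_comm]
          exact Finset.card_nsmul_le_sum (v \ u) a r (fun i _ => ha i) |>.trans_eq' (by
            simp [nsmul_eq_mul, mul_comm])
  linarith [hu.1, hu.2, hv.1, hv.2]

lemma count_Icc {ι : Type*} [Fintype ι] [DecidableEq ι] (a : ι → ℝ) (r : ℝ) (hr : 0 < r)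
    (ha : ∀ i, r ≤ a i) (x L : ℝ) :
    ((univ : Finset (Finset ι)).filter
        (fun t => ∑ i ∈ t, a i ∈ Set.Icc x (x + L))).card
      ≤ (⌊L / r⌋.toNat + 1) * (Fintype.card ι).choose (Fintype.card ι / 2) := by
  classical
  have hsub : (univ : Finset (Finset ι)).filter
        (fun t => ∑ i ∈ t, a i ∈ Set.Icc x (x + L)) ⊆
      (Finset.range (⌊L / r⌋.toNat + 1)).biUnion
        (fun j => (univ : Finset (Finset ι)).filter
          (fun t => ∑ i ∈ t, a i ∈ Set.Ico (x + j * r) (x + j * r + r))) := by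
    intro t ht
    simp only [mem_filter, mem_univ, true_and, Set.mem_Icc] at ht
    simp only [mem_biUnion, mem_range, mem_filter, mem_univ, true_and, Set.mem_Ico]
    set S := ∑ i ∈ t, a i with hS
    have hy0 : 0 ≤ (S - x) / r := div_nonneg (by linarith [ht.1]) hr.le
    have hfl0 : (0:ℤ) ≤ ⌊(S - x) / r⌋ := Int.floor_nonneg.2 hy0
    have hcast : ((⌊(S - x) / r⌋.toNat : ℕ) : ℝ) = ((⌊(S - x) / r⌋ : ℤ) : ℝ) := by
      exact_mod_cast congrArg (fun z : ℤ => (z : ℝ)) (Int.toNat_of_nonneg hfl0)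
    have hfle : ((⌊(S - x) / r⌋ : ℤ) : ℝ) ≤ (S - x) / r := Int.floor_le _
    have hflt : (S - x) / r < ((⌊(S - x) / r⌋ : ℤ) : ℝ) + 1 := Int.lt_floor_add_one _
    refine ⟨⌊(S - x) / r⌋.toNat, ?_, ?_, ?_⟩
    · have hle : ⌊(S - x) / r⌋ ≤ ⌊L / r⌋ := by
        apply Int.floor_le_floor
        apply div_le_div_of_nonneg_right (by linarith [ht.2] : S - x ≤ L) hr.le
      have := Int.toNat_le_toNat hle
      omega
    · rw [hcast]
      have h2 : ((⌊(S - x) / r⌋ : ℤ) : ℝ) * r ≤ S - x := by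
        rw [← le_div_iff₀ hr]; exact hfle
      linarith
    · rw [hcast]
      have h2 : S - x < (((⌊(S - x) / r⌋ : ℤ) : ℝ) + 1) * r := by
        rw [← div_lt_iff₀ hr]; exact hflt
      linarith
  calc ((univ : Finset (Finset ι)).filter
        (fun t => ∑ i ∈ t, a i ∈ Set.Icc x (x + L))).card
      ≤ _ := Finset.card_le_card hsub
    _ ≤ ∑ j ∈ Finset.range (⌊L / r⌋.toNat + 1),
        ((univ : Finset (Finset ι)).filter
          (fun t => ∑ i ∈ t, a i ∈ Set.Ico (x + j * r) (x + j * r + r))).card :=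
        Finset.card_biUnion_le
    _ ≤ ∑ j ∈ Finset.range (⌊L / r⌋.toNat + 1),
        (Fintype.card ι).choose (Fintype.card ι / 2) := by
        apply Finset.sum_le_sum
        intro j _
        exact count_Ico a r hr ha _
    _ = (⌊L / r⌋.toNat + 1) * (Fintype.card ι).choose (Fintype.card ι / 2) := by
        rw [Finset.sum_const, Finset.card_range, smul_eq_mul]

lemma sum_pm_eq {ι : Type*} [Fintype ι] [DecidableEq ι] (a : ι → ℝ) (f : ι → Bool) :
    ∑ i, a i * (if f i then 1 else -1)
      = 2 * ∑ i ∈ univ.filter (fun i => f i), a i - ∑ i, a i := by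
  classical
  have hsplit := Finset.sum_filter_add_sum_filter_not univ (fun i => f i = true)
      (fun i => a i * (if f i then 1 else -1))
  have h1 : ∑ i ∈ univ.filter (fun i => f i = true), a i * (if f i then 1 else -1)
      = ∑ i ∈ univ.filter (fun i => f i = true), a i := by
    apply Finset.sum_congr rfl
    intro i hi
    simp only [mem_filter] at hi
    rw [if_pos hi.2]; ring
  have h2 : ∑ i ∈ univ.filter (fun i => ¬ f i = true), a i * (if f i then 1 else -1)
      = - ∑ i ∈ univ.filter (fun i => ¬ f i = true), a i := by
    rw [← Finset.sum_neg_distrib]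
    apply Finset.sum_congr rfl
    intro i hi
    simp only [mem_filter] at hi
    rw [if_neg hi.2]; ring
  have h3 := Finset.sum_filter_add_sum_filter_not univ (fun i => f i = true) a
  rw [h1, h2] at hsplit
  rw [← hsplit, ← h3]
  ring

lemma countBool_pos {ι : Type*} [Fintype ι] [DecidableEq ι] (a : ι → ℝ) (r : ℝ) (hr : 0 < r)
    (ha : ∀ i, r ≤ a i) (c δ : ℝ) :
    ((univ : Finset (ι → Bool)).filter
        (fun f => |∑ i, a i * (if f i then 1 else -1) + c| ≤ δ)).card
      ≤ (⌊δ / r⌋.toNat + 1) * (Fintype.card ι).choose (Fintype.card ι / 2) := by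
  classical
  set T := ∑ i, a i with hT
  have hmap : ((univ : Finset (ι → Bool)).filter
        (fun f => |∑ i, a i * (if f i then 1 else -1) + c| ≤ δ)).card
      ≤ ((univ : Finset (Finset ι)).filter
        (fun t => ∑ i ∈ t, (2 * a i) ∈ Set.Icc (T - c - δ) ((T - c - δ) + 2 * δ))).card := by
    apply Finset.card_le_card_of_injOn (fun f => univ.filter (fun i => f i))
    · intro f hf
      simp only [mem_coe, mem_filter, mem_univ, true_and] at hf ⊢
      rw [sum_pm_eq] at hf
      rw [Set.mem_Icc, ← Finset.mul_sum]
      have h := abs_le.1 hf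
      constructor <;> linarith [h.1, h.2, hT]
    · intro f _ g _ hfg
      funext i
      have h2 : univ.filter (fun j => f j = true) = univ.filter (fun j => g j = true) := hfg
      have : (i ∈ univ.filter (fun j => f j = true)) = (i ∈ univ.filter (fun j => g j = true)) := by
        rw [h2]
      simp only [mem_filter, mem_univ, true_and, eq_iff_iff] at this
      cases hfi : f i <;> cases hgi : g i <;> simp_all
  calc _ ≤ _ := hmap
    _ ≤ (⌊(2 * δ) / (2 * r)⌋.toNat + 1) * (Fintype.card ι).choose (Fintype.card ι / 2) := by
        apply count_Icc (fun i => 2 * a i) (2 * r) (by linarith) (fun i => by show 2 * r ≤ 2 * a i; linarith [ha i])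
    _ = (⌊δ / r⌋.toNat + 1) * (Fintype.card ι).choose (Fintype.card ι / 2) := by
        congr 3
        rw [mul_div_mul_left _ _ (by norm_num : (2:ℝ) ≠ 0)]

lemma countBool {ι : Type*} [Fintype ι] [DecidableEq ι] (a : ι → ℝ) (r : ℝ) (hr : 0 < r)
    (ha : ∀ i, r ≤ |a i|) (c δ : ℝ) :
    ((univ : Finset (ι → Bool)).filter
        (fun f => |∑ i, a i * (if f i then 1 else -1) + c| ≤ δ)).card
      ≤ (⌊δ / r⌋.toNat + 1) * (Fintype.card ι).choose (Fintype.card ι / 2) := by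
  classical
  have hcard : ((univ : Finset (ι → Bool)).filter
        (fun f => |∑ i, a i * (if f i then 1 else -1) + c| ≤ δ)).card
      = ((univ : Finset (ι → Bool)).filter
        (fun f => |∑ i, |a i| * (if f i then 1 else -1) + c| ≤ δ)).card := by
    apply Finset.card_bij (fun f _ => fun i => xor (decide (a i < 0)) (f i))
    · intro f hf
      simp only [mem_filter, mem_univ, true_and] at hf ⊢
      have hsum : ∑ i, |a i| * (if xor (decide (a i < 0)) (f i) then 1 else -1)
          = ∑ i, a i * (if f i then 1 else -1) := by
        apply Finset.sum_congr rfl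
        intro i _
        rcases lt_or_ge (a i) 0 with hai | hai
        · cases hfi : f i <;>
            simp [hai, abs_of_neg hai, hfi]
        · cases hfi : f i <;>
            simp [not_lt.2 hai, abs_of_nonneg hai, hfi]
      rw [hsum]; exact hf
    · intro f _ g _ hfg
      funext i
      have := congrFun hfg i
      cases hd : decide (a i < 0) <;> simp [hd] at this <;> simp [this]
    · intro g hg
      refine ⟨fun i => xor (decide (a i < 0)) (g i), ?_, ?_⟩
      · simp only [mem_filter, mem_univ, true_and] at hg ⊢
        have hsum : ∑ i, a i * (if xor (decide (a i < 0)) (g i) then 1 else -1)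
            = ∑ i, |a i| * (if g i then 1 else -1) := by
          apply Finset.sum_congr rfl
          intro i _
          rcases lt_or_ge (a i) 0 with hai | hai
          · cases hgi : g i <;>
              simp [hai, abs_of_neg hai, hgi]
          · cases hgi : g i <;>
              simp [not_lt.2 hai, abs_of_nonneg hai, hgi]
        rw [hsum]; exact hg
      · funext i
        cases hd : decide (a i < 0) <;> simp [hd]
  rw [hcard]
  exact countBool_pos (fun i => |a i|) r hr ha c δ

lemma main_count {ι : Type*} [Fintype ι] [DecidableEq ι] (a : ι → ℝ) (r δ h : ℝ) (hr : 0 < r)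
    (p : ι → Prop) [DecidablePred p] (hp : ∀ i, p i → r ≤ |a i|) :
    ((univ : Finset (ι → Bool)).filter
        (fun σ => |(∑ i, a i * (if σ i then 1 else -1)) + h| ≤ δ)).card
      ≤ 2 ^ (Fintype.card {i // ¬ p i}) *
        ((⌊δ / r⌋.toNat + 1) *
          (Fintype.card {i // p i}).choose (Fintype.card {i // p i} / 2)) := by
  classical
  set E := Equiv.piEquivPiSubtypeProd p (fun _ : ι => Bool) with hE
  have hcard : ((univ : Finset (ι → Bool)).filter
        (fun σ => |(∑ i, a i * (if σ i then 1 else -1)) + h| ≤ δ)).card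
      = ∑ y : ({i // p i} → Bool) × ({i // ¬ p i} → Bool),
          if |(∑ i, a i * (if E.symm y i then 1 else -1)) + h| ≤ δ then 1 else 0 := by
    rw [Finset.card_filter]
    exact (Equiv.sum_comp E.symm
      (fun σ => if |(∑ i, a i * (if σ i then 1 else -1)) + h| ≤ δ then 1 else 0)).symm
  rw [hcard, Fintype.sum_prod_type_right]
  have hinner : ∀ g : {i // ¬ p i} → Bool,
      (∑ f : {i // p i} → Bool,
        if |(∑ i, a i * (if E.symm (f, g) i then 1 else -1)) + h| ≤ δ then 1 else 0)
      ≤ (⌊δ / r⌋.toNat + 1) *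
          (Fintype.card {i // p i}).choose (Fintype.card {i // p i} / 2) := by
    intro g
    have hsplit : ∀ f : {i // p i} → Bool,
        (∑ i, a i * (if E.symm (f, g) i then 1 else -1))
          = (∑ i : {i // p i}, a i * (if f i then 1 else -1))
            + (∑ i : {i // ¬ p i}, a i * (if g i then 1 else -1)) := by
      intro f
      rw [← Finset.sum_filter_add_sum_filter_not univ p]
      congr 1
      · rw [Finset.sum_subtype (p := p) (univ.filter p) (fun i => by simp)
            (fun i => a i * (if E.symm (f, g) i then 1 else -1))]
        apply Finset.sum_congr rfl
        rintro ⟨i, hi⟩ _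
        have he : E.symm (f, g) i = f ⟨i, hi⟩ := by
          simp [hE, Equiv.piEquivPiSubtypeProd, hi]
        rw [he]
      · rw [Finset.sum_subtype (p := fun i => ¬ p i) (univ.filter (fun i => ¬ p i)) (fun i => by simp)
            (fun i => a i * (if E.symm (f, g) i then 1 else -1))]
        apply Finset.sum_congr rfl
        rintro ⟨i, hi⟩ _
        have he : E.symm (f, g) i = g ⟨i, hi⟩ := by
          simp [hE, Equiv.piEquivPiSubtypeProd, hi]
        rw [he]
    have : (∑ f : {i // p i} → Bool,
        if |(∑ i, a i * (if E.symm (f, g) i then 1 else -1)) + h| ≤ δ then 1 else 0)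
        = ((univ : Finset ({i // p i} → Bool)).filter
            (fun f => |(∑ i : {i // p i}, a i * (if f i then 1 else -1))
              + ((∑ i : {i // ¬ p i}, a i * (if g i then 1 else -1)) + h)| ≤ δ)).card := by
      rw [Finset.card_filter]
      apply Finset.sum_congr rfl
      intro f _
      rw [hsplit f]
      congr 2
      rw [add_assoc]
    rw [this]
    exact countBool (fun i : {i // p i} => a i) r hr (fun i => hp i i.2) _ δ
  calc (∑ g : {i // ¬ p i} → Bool, ∑ f : {i // p i} → Bool,
        if |(∑ i, a i * (if E.symm (f, g) i then 1 else -1)) + h| ≤ δ then 1 else 0)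
      ≤ ∑ _g : {i // ¬ p i} → Bool, (⌊δ / r⌋.toNat + 1) *
          (Fintype.card {i // p i}).choose (Fintype.card {i // p i} / 2) :=
        Finset.sum_le_sum (fun g _ => hinner g)
    _ = 2 ^ (Fintype.card {i // ¬ p i}) * ((⌊δ / r⌋.toNat + 1) *
          (Fintype.card {i // p i}).choose (Fintype.card {i // p i} / 2)) := by
        rw [Finset.sum_const, Finset.card_univ, smul_eq_mul]
        congr 1
        rw [Fintype.card_fun]
        simp

/-- there is `C > 0` such that for independent uniform ±1 variables
`σ_1, …, σ_m`, reals `a_i`, and `0 < a_min ≤ δ`, if at least `n ≥ 1` indices satisfy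
`|a_i| ≥ a_min`, then for every `h`, `Pr(|∑ a_i σ_i + h| ≤ δ) ≤ C·(δ/a_min)/√n`
(probabilities as counting ratios over `{±1}^m`). -/
theorem stmt11 :
    ∃ C : ℝ, 0 < C ∧
      ∀ (m n : ℕ) (a : Fin m → ℝ) (amin δ : ℝ),
        1 ≤ n → 0 < amin → amin ≤ δ →
        n ≤ Set.ncard {i : Fin m | amin ≤ |a i|} →
        ∀ h : ℝ,
          (Set.ncard {σ : Fin m → Bool |
              |(∑ i, a i * (if σ i then 1 else -1)) + h| ≤ δ} : ℝ) / 2 ^ m ≤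
            C * (δ / amin) / Real.sqrt n := by
  refine ⟨2 * Real.sqrt 2, by positivity, ?_⟩
  intro m n a amin δ hn hamin hδ hcard h
  classical
  set p : Fin m → Prop := fun i => amin ≤ |a i| with hp
  have hset : {σ : Fin m → Bool | |(∑ i, a i * (if σ i then 1 else -1)) + h| ≤ δ}
      = ↑((univ : Finset (Fin m → Bool)).filter
          (fun σ => |(∑ i, a i * (if σ i then 1 else -1)) + h| ≤ δ)) := by
    ext σ; simp
  rw [hset, Set.ncard_coe_finset]
  set k := Fintype.card {i // p i} with hk
  have hnk : n ≤ k := by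
    have hseteq : {i : Fin m | p i} = ↑((univ : Finset (Fin m)).filter p) := by
      ext i; simp
    rw [hseteq, Set.ncard_coe_finset] at hcard
    rwa [hk, Fintype.card_subtype]
  have hk1 : 1 ≤ k := le_trans hn hnk
  have hkm : k ≤ m := by
    have := Fintype.card_subtype_le p
    simpa using this
  have hcompl : Fintype.card {i // ¬ p i} = m - k := by
    rw [Fintype.card_subtype_compl]
    simp [hk]
  have hcount := main_count a amin δ h hamin p (fun i hi => hi)
  rw [hcompl] at hcount
  set F := ⌊δ / amin⌋.toNat with hF
  set N := ((univ : Finset (Fin m → Bool)).filter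
          (fun σ => |(∑ i, a i * (if σ i then 1 else -1)) + h| ≤ δ)).card with hN
  have h1le : (1:ℝ) ≤ δ / amin := (one_le_div hamin).2 hδ
  have hF2 : ((F:ℝ) + 1) ≤ 2 * (δ / amin) := by
    have h0 : (0:ℤ) ≤ ⌊δ / amin⌋ := Int.floor_nonneg.2 (by linarith)
    have hc : ((F:ℕ) : ℝ) = ((⌊δ / amin⌋ : ℤ) : ℝ) := by
      exact_mod_cast congrArg (fun z : ℤ => (z : ℝ)) (Int.toNat_of_nonneg h0)
    have := Int.floor_le (δ / amin)
    rw [hc]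
    linarith
  have hch : ((k.choose (k / 2)) : ℝ) ≤ Real.sqrt 2 * 2 ^ k / Real.sqrt k :=
    choose_half_le k hk1
  have hsk : (0:ℝ) < Real.sqrt k := Real.sqrt_pos.2 (by exact_mod_cast hk1)
  have hsn : (0:ℝ) < Real.sqrt n := Real.sqrt_pos.2 (by exact_mod_cast hn)
  have hsnk : Real.sqrt n ≤ Real.sqrt k := Real.sqrt_le_sqrt (by exact_mod_cast hnk)
  have hNle : (N : ℝ) ≤ 2 ^ (m - k) * (((F:ℝ) + 1) * (k.choose (k / 2))) := by
    exact_mod_cast hcount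
  have h2pow : (2:ℝ) ^ (m - k) * 2 ^ k = 2 ^ m := by
    rw [← pow_add, Nat.sub_add_cancel hkm]
  have hmain : (N : ℝ) ≤ 2 ^ m * ((2 * (δ / amin)) * (Real.sqrt 2 / Real.sqrt k)) := by
    calc (N : ℝ) ≤ 2 ^ (m - k) * (((F:ℝ) + 1) * (k.choose (k / 2))) := hNle
      _ ≤ 2 ^ (m - k) * ((2 * (δ / amin)) * (Real.sqrt 2 * 2 ^ k / Real.sqrt k)) := by
          apply mul_le_mul_of_nonneg_left _ (by positivity)
          apply mul_le_mul hF2 hch (by positivity) (by linarith)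
      _ = (2 ^ (m - k) * 2 ^ k) * ((2 * (δ / amin)) * (Real.sqrt 2 / Real.sqrt k)) := by
          field_simp
      _ = 2 ^ m * ((2 * (δ / amin)) * (Real.sqrt 2 / Real.sqrt k)) := by rw [h2pow]
  rw [div_le_iff₀ (by positivity : (0:ℝ) < 2 ^ m)]
  calc (N : ℝ) ≤ 2 ^ m * ((2 * (δ / amin)) * (Real.sqrt 2 / Real.sqrt k)) := hmain
    _ ≤ 2 ^ m * ((2 * (δ / amin)) * (Real.sqrt 2 / Real.sqrt n)) := by
        apply mul_le_mul_of_nonneg_left _ (by positivity)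
        apply mul_le_mul_of_nonneg_left _ (by linarith)
        apply div_le_div_of_nonneg_left (by positivity) hsn hsnk
    _ = 2 * Real.sqrt 2 * (δ / amin) / Real.sqrt n * 2 ^ m := by
        field_simp
end

section
/- For every real number x, |cos x| ≤ exp(−(1/2)·(inf over integers m of (x − π·m)^2)); equivalently, |cos x| ≤ exp(−dist(x, πℤ)^2/2). -/
open Real

private lemma exp_cube_lb {s : ℝ} (h0 : 0 ≤ s) (h1 : s ≤ 1) :
    1 - s + s ^ 2 / 2 - s ^ 3 * (2 / 9) ≤ Real.exp (-s) := by
  have hb := Real.exp_bound (x := -s) (by rw [abs_neg, abs_of_nonneg h0]; exact h1)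
    (n := 3) (by norm_num)
  rw [abs_neg, abs_of_nonneg h0] at hb
  have h2 := (abs_le.1 hb).1
  have hsum : ∑ m ∈ Finset.range 3, (-s) ^ m / m.factorial = 1 - s + s ^ 2 / 2 := by
    simp [Finset.sum_range_succ]
    ring
  rw [hsum] at h2
  norm_num [Nat.factorial] at h2
  linarith

private lemma key {t : ℝ} (h0 : 0 ≤ t) (h : t ≤ π / 2) :
    Real.cos t ≤ Real.exp (-t ^ 2 / 2) := by
  rcases eq_or_lt_of_le h0 with rfl | ht
  · simp
  rcases le_or_gt t 1.41 with hle | hgt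
  · -- small t
    have hu : (0:ℝ) < t / 2 := by linarith
    have hu1 : t / 2 ≤ 1 := by linarith
    have hs : t / 2 - (t / 2) ^ 3 / 4 < Real.sin (t / 2) := by
      have := Real.sin_gt_sub_cube hu; linarith [pow_pos hu 3]
    have hsnn : 0 ≤ t / 2 - (t / 2) ^ 3 / 4 := by nlinarith [sq_nonneg (t/2)]
    have hcos : Real.cos t = 1 - 2 * Real.sin (t / 2) ^ 2 := by
      have h1 : Real.cos (2 * (t / 2)) = 2 * Real.cos (t / 2) ^ 2 - 1 := Real.cos_two_mul _
      have h2 := Real.sin_sq_add_cos_sq (t / 2)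
      have h3 : (2 : ℝ) * (t / 2) = t := by ring
      rw [h3] at h1
      linarith
    have hexp := exp_cube_lb (s := t ^ 2 / 2) (by positivity) (by nlinarith)
    have heq : -(t ^ 2 / 2) = -t ^ 2 / 2 := by ring
    rw [heq] at hexp
    have hsq : Real.sin (t / 2) ^ 2 ≥ (t / 2 - (t / 2) ^ 3 / 4) ^ 2 := by nlinarith
    have ht2 : t ^ 2 ≤ 1.9881 := by nlinarith
    have ht4 : 0 ≤ t ^ 4 * (2.42 - t ^ 2) :=
      mul_nonneg (pow_nonneg h0 4) (by linarith)
    have hpoly : 1 - 2 * (t / 2 - (t / 2) ^ 3 / 4) ^ 2 ≤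
        1 - t ^ 2 / 2 + (t ^ 2 / 2) ^ 2 / 2 - (t ^ 2 / 2) ^ 3 * (2 / 9) := by
      nlinarith [pow_nonneg h0 6]
    rw [hcos]
    nlinarith
  · -- large t
    have hπ : π < 3.15 := Real.pi_lt_d2
    have hπ' : (3.14 : ℝ) < π := Real.pi_gt_d2
    have hcos : Real.cos t ≤ π / 2 - t := by
      rw [← Real.sin_pi_div_two_sub]
      rcases eq_or_lt_of_le (by linarith : t ≤ π / 2) with rfl | hlt
      · simp
      · exact le_of_lt (Real.sin_lt (by linarith))
    have hc2 : Real.cos t ≤ 0.165 := by linarith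
    have ht2 : t ^ 2 ≤ (π / 2) ^ 2 := by nlinarith
    have hmono : Real.exp (-(π / 2) ^ 2 / 2) ≤ Real.exp (-t ^ 2 / 2) :=
      Real.exp_le_exp.2 (by linarith)
    have hval : (0.165 : ℝ) ≤ Real.exp (-(π / 2) ^ 2 / 2) := by
      rw [show -(π / 2) ^ 2 / 2 = -((π / 2) ^ 2 / 2) by ring, Real.exp_neg]
      rw [le_inv_comm₀ (by norm_num) (Real.exp_pos _)]
      calc Real.exp ((π / 2) ^ 2 / 2) ≤ Real.exp 1.25 := by
            apply Real.exp_le_exp.2; nlinarith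
        _ = Real.exp 1 * Real.exp 0.25 := by rw [← Real.exp_add]; norm_num
        _ ≤ 2.7182818286 * Real.exp 0.25 := by
            have := Real.exp_one_lt_d9
            nlinarith [Real.exp_pos (0.25 : ℝ)]
        _ ≤ 2.7182818286 * (4 / 3) := by
            have h3 : Real.exp 0.25 ≤ 4 / 3 := by
              have h5 := Real.add_one_lt_exp (x := (-0.25 : ℝ)) (by norm_num)
              have h6 : Real.exp 0.25 * Real.exp (-0.25) = 1 := by
                rw [← Real.exp_add]; norm_num
              nlinarith [Real.exp_pos (0.25 : ℝ), Real.exp_pos (-0.25 : ℝ)]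
            nlinarith
        _ ≤ 0.165⁻¹ := by norm_num
    linarith

/-- for every real `x`, `|cos x| ≤ exp(-(1/2)·inf_{m ∈ ℤ} (x - π m)^2)`. -/
theorem stmt12 (x : ℝ) :
    |Real.cos x| ≤ Real.exp (-(⨅ m : ℤ, (x - Real.pi * m) ^ 2) / 2) := by
  obtain ⟨d, hd⟩ : ∃ d : ℝ, d = x - π * (round (x / π) : ℤ) := ⟨_, rfl⟩
  have hπpos := Real.pi_pos
  have hdabs : |d| ≤ π / 2 := by
    have h1 : |x / π - (round (x / π) : ℝ)| ≤ 1 / 2 := abs_sub_round (x / π)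
    have h2 : d = π * (x / π - round (x / π)) := by
      rw [hd, mul_sub, mul_div_cancel₀ _ hπpos.ne']
    rw [h2, abs_mul, abs_of_pos hπpos]
    nlinarith
  have hcosx : |Real.cos x| = |Real.cos d| := by
    have hx : x = d + (round (x / π) : ℤ) * π := by rw [hd]; ring
    rw [hx, Real.cos_add, Real.sin_int_mul_pi, mul_zero, sub_zero, abs_mul,
      Real.abs_cos_int_mul_pi, mul_one]
  have hcosd : |Real.cos d| = Real.cos |d| := by
    rw [← Real.cos_abs d]
    exact abs_of_nonneg (Real.cos_nonneg_of_mem_Icc ⟨by linarith [abs_nonneg d], hdabs⟩)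
  have hkey := key (abs_nonneg d) hdabs
  have hinf_le : (⨅ k : ℤ, (x - π * k) ^ 2) ≤ d ^ 2 := by
    have h := ciInf_le (f := fun k : ℤ => (x - π * k) ^ 2)
      ⟨0, fun y ⟨k, hk⟩ => hk ▸ sq_nonneg _⟩ (round (x / π))
    rw [hd]
    exact h
  have hmono : Real.exp (-d ^ 2 / 2) ≤ Real.exp (-(⨅ k : ℤ, (x - π * k) ^ 2) / 2) :=
    Real.exp_le_exp.2 (by linarith)
  calc |Real.cos x| = Real.cos |d| := by rw [hcosx, hcosd]
    _ ≤ Real.exp (-|d| ^ 2 / 2) := hkey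
    _ = Real.exp (-d ^ 2 / 2) := by rw [sq_abs]
    _ ≤ _ := hmono
end

section
/- There exists a constant C > 0 such that the following holds. Let a be a real number with |a| ≥ 1, let δ ≥ 1, let t > 0, and let K be a Gaussian random variable with mean 0 and variance δ^{−2}. Then Pr(|cos(a·K)| ≥ e^{−t}) ≤ C·δ·√t. -/
set_option maxHeartbeats 1000000

open MeasureTheory ProbabilityTheory Real Set NNReal

lemma pdf_anti (v : ℝ≥0) {x y : ℝ} (h : |x| ≤ |y|) :
    gaussianPDFReal 0 v y ≤ gaussianPDFReal 0 v x := by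
  unfold gaussianPDFReal
  apply mul_le_mul_of_nonneg_left _ (by positivity)
  apply Real.exp_le_exp.2
  have hxy : x ^ 2 ≤ y ^ 2 := by
    rw [← sq_abs x, ← sq_abs y]
    exact pow_le_pow_left₀ (abs_nonneg _) h 2
  rcases eq_or_ne v 0 with hv | hv
  · simp [hv]
  · have hv' : (0:ℝ) < 2 * v := by positivity
    simp only [sub_zero, neg_div]
    apply neg_le_neg
    gcongr

lemma pdf_le_max (v : ℝ≥0) (x : ℝ) : gaussianPDFReal 0 v x ≤ (Real.sqrt (2*π*v))⁻¹ := by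
  unfold gaussianPDFReal
  nth_rewrite 2 [← mul_one ((Real.sqrt (2*π*v))⁻¹)]
  apply mul_le_mul_of_nonneg_left _ (by positivity)
  rw [Real.exp_le_one_iff, neg_div]
  have : (0:ℝ) ≤ (x - 0)^2 / (2*v) := by positivity
  linarith

lemma meas_le (v : ℝ≥0) (hv : v ≠ 0) {p q M : ℝ} (hpq : p ≤ q)
    (hM : ∀ x ∈ Icc p q, gaussianPDFReal 0 v x ≤ M) :
    gaussianReal 0 v (Icc p q) ≤ ENNReal.ofReal M * ENNReal.ofReal (q - p) := by
  rw [gaussianReal_apply 0 hv]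
  calc (∫⁻ x in Icc p q, gaussianPDF 0 v x)
      ≤ ∫⁻ _ in Icc p q, ENNReal.ofReal M := by
        refine setLIntegral_mono measurable_const fun x hx => ?_
        exact ENNReal.ofReal_le_ofReal (hM x hx)
    _ = ENNReal.ofReal M * ENNReal.ofReal (q - p) := by
        rw [setLIntegral_const, Real.volume_Icc]

lemma meas_ge (v : ℝ≥0) (hv : v ≠ 0) {p q m : ℝ} (hpq : p ≤ q)
    (hm : ∀ x ∈ Icc p q, m ≤ gaussianPDFReal 0 v x) :
    ENNReal.ofReal m * ENNReal.ofReal (q - p) ≤ gaussianReal 0 v (Icc p q) := by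
  rw [gaussianReal_apply 0 hv]
  calc ENNReal.ofReal m * ENNReal.ofReal (q - p)
      = ∫⁻ _ in Icc p q, ENNReal.ofReal m := by
        rw [setLIntegral_const, Real.volume_Icc]
    _ ≤ ∫⁻ x in Icc p q, gaussianPDF 0 v x := by
        refine setLIntegral_mono (measurable_gaussianPDF 0 v) fun x hx => ?_
        exact ENNReal.ofReal_le_ofReal (hm x hx)

lemma core (v : ℝ≥0) (hv : v ≠ 0) {w : ℝ} (hw : 0 < w) (hw2 : w ≤ π/4) :
    gaussianReal 0 v (⋃ n : ℤ, Icc (n*π - w) (n*π + w)) ≤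
      ENNReal.ofReal ((Real.sqrt (2*π*v))⁻¹ * (2*w))
        + ENNReal.ofReal (2*w/(π - 2*w)) := by
  have hπ := Real.pi_pos
  have hπw : 0 < π - 2*w := by linarith
  set μ := gaussianReal 0 v with hμdef
  -- helper sets
  set g : ℤ → ℤ := fun n => if 0 < n then n - 1 else n with hg
  set K : ℤ → Set ℝ :=
    fun n => if n = 0 then ∅ else Icc ((g n : ℝ)*π + w) (((g n : ℝ)+1)*π - w) with hK
  have hginj : ∀ m n : ℤ, m ≠ 0 → n ≠ 0 → g m = g n → m = n := by
    intro m n hm hn h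
    simp only [hg] at h
    split_ifs at h <;> omega
  -- comparison for nonzero n
  have hcomp : ∀ n : ℤ,
      (if n = 0 then 0 else μ (Icc (n*π - w) (n*π + w)))
        ≤ ENNReal.ofReal (2*w/(π - 2*w)) * μ (K n) := by
    intro n
    rcases eq_or_ne n 0 with rfl | hn
    · simp
    rw [if_neg hn]
    -- the reference density value
    have key : ∀ c c' : ℝ, (∀ x ∈ Icc (n*π - w) (n*π + w), |c| ≤ |x|) →
        (∀ x ∈ Icc c' (c' + (π - 2*w)), |x| ≤ |c|) →
        Icc c' (c' + (π - 2*w)) = K n →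
        μ (Icc (n*π - w) (n*π + w)) ≤ ENNReal.ofReal (2*w/(π - 2*w)) * μ (K n) := by
      intro c c' h1 h2 h3
      have e1 : μ (Icc (n*π - w) (n*π + w)) ≤
          ENNReal.ofReal (gaussianPDFReal 0 v c) * ENNReal.ofReal (2*w) := by
        have := meas_le v hv (p := n*π - w) (q := n*π + w) (by linarith)
          (fun x hx => pdf_anti v (h1 x hx))
        convert this using 2
        ring
      have e2 : ENNReal.ofReal (gaussianPDFReal 0 v c) * ENNReal.ofReal (π - 2*w)
          ≤ μ (K n) := by
        rw [← h3]
        have := meas_ge v hv (p := c') (q := c' + (π - 2*w)) (by linarith)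
          (fun x hx => pdf_anti v (h2 x hx))
        convert this using 2
        ring
      calc μ (Icc (n*π - w) (n*π + w))
          ≤ ENNReal.ofReal (gaussianPDFReal 0 v c) * ENNReal.ofReal (2*w) := e1
        _ = ENNReal.ofReal (2*w/(π - 2*w)) *
            (ENNReal.ofReal (gaussianPDFReal 0 v c) * ENNReal.ofReal (π - 2*w)) := by
            have hf := gaussianPDFReal_nonneg 0 v c
            have hq : (0:ℝ) ≤ 2*w/(π - 2*w) := by positivity
            rw [← ENNReal.ofReal_mul hf, ← ENNReal.ofReal_mul hf,
              ← ENNReal.ofReal_mul hq]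
            congr 1
            field_simp
        _ ≤ ENNReal.ofReal (2*w/(π - 2*w)) * μ (K n) := by
            exact mul_le_mul_right e2 _
    rcases lt_or_gt_of_ne hn with hneg | hpos
    · -- n ≤ -1 : c = n*π + w, K n = Icc (n*π + w) ((n+1)*π - w)
      have hn1 : (n:ℝ) ≤ -1 := by exact_mod_cast (by omega : n ≤ -1)
      have hc : (n:ℝ)*π + w < 0 := by nlinarith
      refine key ((n:ℝ)*π + w) ((n:ℝ)*π + w) ?_ ?_ ?_
      · intro x hx
        have hx2 := hx.2
        have : x < 0 := by linarith
        rw [abs_of_neg hc, abs_of_neg this]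
        linarith
      · intro x hx
        have hx1 := hx.1
        have hx2 := hx.2
        have hxneg : x < 0 := by nlinarith
        rw [abs_of_neg hc, abs_of_neg hxneg]
        linarith
      · rw [hK]
        simp only [if_neg hn, hg, if_neg (by omega : ¬ 0 < n)]
        congr 1
        ring
    · -- n ≥ 1 : c = n*π - w, K n = Icc ((n-1)*π + w) (n*π - w)
      have hn1 : (1:ℝ) ≤ (n:ℝ) := by exact_mod_cast (by omega : 1 ≤ n)
      have hc : 0 < (n:ℝ)*π - w := by nlinarith
      refine key ((n:ℝ)*π - w) (((n:ℝ)-1)*π + w) ?_ ?_ ?_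
      · intro x hx
        have hx1 := hx.1
        have : 0 < x := by linarith
        rw [abs_of_pos hc, abs_of_pos this]
        linarith
      · intro x hx
        have hx1 := hx.1
        have hx2 := hx.2
        have hxpos : 0 < x := by nlinarith
        rw [abs_of_pos hc, abs_of_pos hxpos]
        linarith
      · rw [hK]
        simp only [if_neg hn, hg, if_pos hpos]
        have : ((n - 1 : ℤ) : ℝ) = (n:ℝ) - 1 := by push_cast; ring
        rw [this]
        congr 1 <;> ring
  -- disjointness of K
  have hdisj : Pairwise (Function.onFun Disjoint K) := by
    intro m n hmn
    rcases eq_or_ne m 0 with rfl | hm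
    · simp [hK, Function.onFun]
    rcases eq_or_ne n 0 with rfl | hn0
    · simp [hK, Function.onFun]
    have hgmn : g m ≠ g n := fun h => hmn (hginj m n hm hn0 h)
    have main : ∀ a b : ℤ, a < b →
        Disjoint (Icc ((a : ℝ)*π + w) (((a:ℝ)+1)*π - w))
          (Icc ((b : ℝ)*π + w) (((b:ℝ)+1)*π - w)) := by
      intro a b hab
      have h1 : ((a:ℝ)+1) ≤ (b:ℝ) := by exact_mod_cast (by omega : a + 1 ≤ b)
      have h2 : ((a:ℝ)+1)*π ≤ (b:ℝ)*π := by nlinarith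
      rw [Set.disjoint_left]
      rintro x ⟨_, hx2⟩ ⟨hx3, _⟩
      linarith
    simp only [Function.onFun, hK, if_neg hm, if_neg hn0]
    rcases lt_or_gt_of_ne hgmn with h | h
    · exact main _ _ h
    · exact (main _ _ h).symm
  have hKmeas : ∀ n, MeasurableSet (K n) := by
    intro n
    simp only [hK]
    split_ifs
    · exact MeasurableSet.empty
    · exact measurableSet_Icc
  have hKsum : (∑' n : ℤ, μ (K n)) ≤ 1 := by
    calc (∑' n : ℤ, μ (K n)) ≤ μ (⋃ n, K n) :=
        tsum_meas_le_meas_iUnion_of_disjoint μ hKmeas hdisj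
      _ ≤ 1 := prob_le_one
  -- zero term
  have hzero : μ (Icc (((0:ℤ):ℝ)*π - w) (((0:ℤ):ℝ)*π + w)) ≤
      ENNReal.ofReal ((Real.sqrt (2*π*v))⁻¹ * (2*w)) := by
    have h0 : (((0:ℤ):ℝ)*π - w : ℝ) = -w := by push_cast; ring
    have h1 : (((0:ℤ):ℝ)*π + w : ℝ) = w := by push_cast; ring
    rw [h0, h1]
    have := meas_le v hv (p := -w) (q := w) (by linarith)
      (fun x _ => pdf_le_max v x)
    refine this.trans ?_
    rw [← ENNReal.ofReal_mul (by positivity)]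
    apply ENNReal.ofReal_le_ofReal
    have h2 : w - (-w) = 2*w := by ring
    rw [h2]
  calc μ (⋃ n : ℤ, Icc (n*π - w) (n*π + w))
      ≤ ∑' n : ℤ, μ (Icc (n*π - w) (n*π + w)) := measure_iUnion_le _
    _ = μ (Icc ((0:ℤ)*π - w) ((0:ℤ)*π + w)) +
        ∑' n : ℤ, (if n = 0 then 0 else μ (Icc (n*π - w) (n*π + w))) := by
        convert ENNReal.tsum_eq_add_tsum_ite (0:ℤ)
    _ ≤ ENNReal.ofReal ((Real.sqrt (2*π*v))⁻¹ * (2*w)) +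
        ENNReal.ofReal (2*w/(π - 2*w)) := by
        apply add_le_add hzero
        calc (∑' n : ℤ, (if n = 0 then 0 else μ (Icc (n*π - w) (n*π + w))))
            ≤ ∑' n : ℤ, ENNReal.ofReal (2*w/(π - 2*w)) * μ (K n) :=
              ENNReal.tsum_le_tsum hcomp
          _ = ENNReal.ofReal (2*w/(π - 2*w)) * ∑' n : ℤ, μ (K n) := by
              rw [ENNReal.tsum_mul_left]
          _ ≤ ENNReal.ofReal (2*w/(π - 2*w)) * 1 := mul_le_mul_right hKsum _
          _ = ENNReal.ofReal (2*w/(π - 2*w)) := mul_one _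

lemma arccos_anti {x y : ℝ} (h : x ≤ y) : arccos y ≤ arccos x := by
  unfold Real.arccos
  have := Real.monotone_arcsin h
  linarith

lemma cover {c : ℝ} (hc0 : 0 ≤ c) (hc1 : c ≤ 1) {x : ℝ} (hx : c ≤ |cos x|) :
    ∃ n : ℤ, x ∈ Icc ((n:ℝ)*π - arccos c) ((n:ℝ)*π + arccos c) := by
  have hπ := Real.pi_pos
  refine ⟨round (x/π), ?_⟩
  set n := round (x/π) with hn
  have h1 : |x - (n:ℝ)*π| ≤ π/2 := by
    have h := abs_sub_round (x/π)
    have he : x - (n:ℝ)*π = (x/π - (n:ℝ)) * π := by field_simp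
    rw [he, abs_mul, abs_of_pos hπ]
    calc |x/π - (n:ℝ)| * π ≤ (1/2) * π := by
          apply mul_le_mul_of_nonneg_right h hπ.le
      _ = π/2 := by ring
  have h2 : |cos (x - (n:ℝ)*π)| = |cos x| := by
    rw [Real.cos_sub, Real.sin_int_mul_pi, mul_zero, add_zero, abs_mul,
      Real.abs_cos_int_mul_pi, mul_one]
  have h3 : 0 ≤ cos (x - (n:ℝ)*π) := by
    apply Real.cos_nonneg_of_mem_Icc
    constructor <;> [linarith [abs_le.1 h1 |>.1]; linarith [abs_le.1 h1 |>.2]]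
  have h4 : c ≤ cos |x - (n:ℝ)*π| := by
    rw [Real.cos_abs]
    rw [← abs_of_nonneg h3, h2]
    exact hx
  have h5 : |x - (n:ℝ)*π| ≤ arccos c := by
    have := arccos_anti h4
    rwa [Real.arccos_cos (abs_nonneg _) (by linarith)] at this
  have h6 := abs_le.1 h5
  exact ⟨by linarith [h6.1], by linarith [h6.2]⟩

lemma map_mul_gauss (v : ℝ≥0) (c : ℝ) :
    (gaussianReal 0 v).map (c * ·) = gaussianReal 0 ((c^2 : ℝ).toNNReal * v) := by
  rw [gaussianReal_map_const_mul, mul_zero]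
  congr 2
  apply NNReal.coe_injective
  simp [Real.coe_toNNReal _ (sq_nonneg c)]

/-- there is `C > 0` such that for every real `a` with `|a| ≥ 1`, every
`δ ≥ 1` and every `t > 0`, a centered Gaussian `K` of variance `δ⁻²` satisfies
`Pr(|cos(a·K)| ≥ e^{-t}) ≤ C·δ·√t`. -/
theorem stmt13 :
    ∃ C : ℝ, 0 < C ∧
      ∀ a δ t : ℝ, 1 ≤ |a| → 1 ≤ δ → 0 < t →
        ((gaussianReal 0 ((δ⁻¹ ^ 2).toNNReal))
            {k : ℝ | Real.exp (-t) ≤ |Real.cos (a * k)|}).toReal ≤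
          C * δ * Real.sqrt t := by
  refine ⟨20, by norm_num, fun a δ t ha hδ ht => ?_⟩
  have hπ := Real.pi_pos
  have hδ0 : (0:ℝ) < δ := lt_of_lt_of_le one_pos hδ
  set v : ℝ≥0 := (δ⁻¹ ^ 2).toNNReal with hvdef
  have hvpos : (0:ℝ) < δ⁻¹ ^ 2 := by positivity
  have hv : v ≠ 0 := by
    simp only [hvdef, ne_eq, Real.toNNReal_eq_zero, not_le]
    exact hvpos
  have hst : Real.sqrt t > 0 := Real.sqrt_pos.2 ht
  have hPle : ((gaussianReal 0 v) {k : ℝ | Real.exp (-t) ≤ |Real.cos (a * k)|}).toReal ≤ 1 := by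
    have h := prob_le_one (μ := gaussianReal 0 v)
      (s := {k : ℝ | Real.exp (-t) ≤ |Real.cos (a * k)|})
    simpa using ENNReal.toReal_mono (by norm_num) h
  by_cases hcase : (1:ℝ)/100 ≤ t
  · have h10 : (1:ℝ)/10 ≤ Real.sqrt t := by
      rw [show (1:ℝ)/10 = Real.sqrt (1/100) by
        rw [show (1:ℝ)/100 = (1/10)^2 by norm_num, Real.sqrt_sq (by norm_num)]]
      exact Real.sqrt_le_sqrt hcase
    calc ((gaussianReal 0 v) {k : ℝ | Real.exp (-t) ≤ |Real.cos (a * k)|}).toReal ≤ 1 := hPle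
      _ ≤ 20 * δ * Real.sqrt t := by nlinarith
  · push_neg at hcase
    set w := arccos (Real.exp (-t)) with hwdef
    have hexp1 : Real.exp (-t) < 1 := by
      rw [Real.exp_lt_one_iff]; linarith
    have hexp0 : (0:ℝ) < Real.exp (-t) := Real.exp_pos _
    have hw0 : 0 < w := Real.arccos_pos.2 hexp1
    have hwπ : w ≤ π := Real.arccos_le_pi _
    -- w ≤ π * sqrt t
    have hwt : w ≤ π * Real.sqrt t := by
      have hcw : Real.cos w = Real.exp (-t) :=
        Real.cos_arccos (by linarith) hexp1.le
      have hub : Real.cos w ≤ 1 - 2/π^2 * w^2 :=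
        Real.cos_le_one_sub_mul_cos_sq (abs_le.2 ⟨by linarith, hwπ⟩)
      have hlb : 1 - t ≤ Real.exp (-t) := by
        have := Real.add_one_le_exp (-t)
        linarith
      have hq : 2/π^2*w^2 ≤ t := by linarith
      have hw2 : w^2 ≤ π^2/2 * t := by
        have he : w^2 = π^2/2 * (2/π^2*w^2) := by field_simp
        rw [he]
        apply mul_le_mul_of_nonneg_left hq (by positivity)
      have : w ≤ Real.sqrt (π^2/2 * t) := by
        rw [← Real.sqrt_sq hw0.le]
        exact Real.sqrt_le_sqrt hw2
      refine this.trans ?_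
      rw [show π^2/2 * t = (π^2/2) * t by ring, Real.sqrt_mul (by positivity)]
      apply mul_le_mul_of_nonneg_right _ (Real.sqrt_nonneg t)
      rw [show (π:ℝ)^2/2 = π^2 * (1/2) by ring, Real.sqrt_mul (by positivity),
        Real.sqrt_sq hπ.le]
      nlinarith [Real.sqrt_nonneg (1/2:ℝ), Real.sq_sqrt (by norm_num : (0:ℝ) ≤ 1/2)]
    have hst1 : Real.sqrt t ≤ 1/10 := by
      rw [show (1:ℝ)/10 = Real.sqrt (1/100) by
        rw [show (1:ℝ)/100 = (1/10)^2 by norm_num, Real.sqrt_sq (by norm_num)]]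
      exact Real.sqrt_le_sqrt hcase.le
    have hw4 : w ≤ π/4 := by nlinarith
    -- rewrite the event via b = |a|
    set b := |a| with hbdef
    have hb1 : (1:ℝ) ≤ b := ha
    have hb0 : b ≠ 0 := by positivity
    set S : Set ℝ := {x : ℝ | Real.exp (-t) ≤ |Real.cos x|} with hSdef
    have hSmeas : MeasurableSet S := by
      apply measurableSet_le measurable_const
      exact (Real.continuous_cos.abs).measurable
    have hev : {k : ℝ | Real.exp (-t) ≤ |Real.cos (a * k)|} = (fun k => b * k) ⁻¹' S := by
      ext k
      simp only [hSdef, Set.mem_setOf_eq, Set.mem_preimage]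
      rcases abs_choice a with h | h
      · rw [hbdef, h]
      · rw [hbdef, h, neg_mul, Real.cos_neg]
    rw [hev]
    have hmap : (gaussianReal 0 v) ((fun k => b * k) ⁻¹' S)
        = ((gaussianReal 0 v).map (b * ·)) S :=
      (Measure.map_apply (measurable_const_mul b) hSmeas).symm
    rw [hmap, map_mul_gauss]
    obtain ⟨v', hv'eq⟩ : ∃ v' : ℝ≥0, ((b:ℝ)^2).toNNReal * v = v' := ⟨_, rfl⟩
    rw [hv'eq]
    have hv' : v' ≠ 0 := by
      rw [← hv'eq]
      apply mul_ne_zero _ hv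
      intro h
      have : ((b:ℝ)^2).toNNReal.toReal = 0 := congrArg NNReal.toReal h
      rw [Real.coe_toNNReal _ (sq_nonneg b)] at this
      nlinarith
    -- subset and core
    have hsub : S ⊆ ⋃ n : ℤ, Icc ((n:ℝ)*π - w) ((n:ℝ)*π + w) := by
      intro x hx
      obtain ⟨n, hn⟩ := cover hexp0.le hexp1.le hx
      exact Set.mem_iUnion.2 ⟨n, hn⟩
    have hcore := core v' hv' hw0 hw4
    have hle : (gaussianReal 0 v') S ≤
        ENNReal.ofReal ((Real.sqrt (2*π*v'))⁻¹ * (2*w)) + ENNReal.ofReal (2*w/(π - 2*w)) :=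
      (measure_mono hsub).trans hcore
    have hπw : (0:ℝ) < π - 2*w := by linarith
    have hM : (Real.sqrt (2*π*(v':ℝ)))⁻¹ ≤ δ := by
      have hv'val : (v' : ℝ) = b^2 * δ⁻¹^2 := by
        rw [← hv'eq, NNReal.coe_mul, hvdef, Real.coe_toNNReal _ hvpos.le,
          Real.coe_toNNReal _ (sq_nonneg b)]
      have hb2 : (1:ℝ) ≤ b^2 := by nlinarith
      have h2π : (1:ℝ) ≤ 2*π := by linarith [Real.two_le_pi]
      have h1 : δ⁻¹^2 ≤ 2*π*(v':ℝ) := by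
        rw [hv'val]
        calc δ⁻¹^2 ≤ b^2 * δ⁻¹^2 := le_mul_of_one_le_left hvpos.le hb2
          _ ≤ 2*π*(b^2 * δ⁻¹^2) :=
            le_mul_of_one_le_left (by positivity) h2π
      have h2 : Real.sqrt (δ⁻¹^2) ≤ Real.sqrt (2*π*(v':ℝ)) := Real.sqrt_le_sqrt h1
      rw [Real.sqrt_sq (by positivity)] at h2
      have h3 : (0:ℝ) < δ⁻¹ := by positivity
      calc (Real.sqrt (2*π*(v':ℝ)))⁻¹ ≤ (δ⁻¹)⁻¹ := by
            apply inv_anti₀ h3 h2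
        _ = δ := inv_inv δ
    -- final numerics
    have hA : (Real.sqrt (2*π*(v':ℝ)))⁻¹ * (2*w) ≤ 2*π*δ*Real.sqrt t := by
      have hMn : (0:ℝ) ≤ (Real.sqrt (2*π*(v':ℝ)))⁻¹ := by positivity
      calc (Real.sqrt (2*π*(v':ℝ)))⁻¹ * (2*w) ≤ δ * (2*w) := by
            apply mul_le_mul_of_nonneg_right hM (by linarith)
        _ ≤ δ * (2*(π*Real.sqrt t)) := by
            apply mul_le_mul_of_nonneg_left _ (by linarith)
            linarith
        _ = 2*π*δ*Real.sqrt t := by ring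
    have hB : 2*w/(π - 2*w) ≤ 4*Real.sqrt t := by
      rw [div_le_iff₀ hπw]
      have : π/2 ≤ π - 2*w := by linarith
      nlinarith
    calc ((gaussianReal 0 v') S).toReal
        ≤ (Real.sqrt (2*π*(v':ℝ)))⁻¹ * (2*w) + 2*w/(π - 2*w) := by
          apply ENNReal.toReal_le_of_le_ofReal
          · positivity
          · rw [ENNReal.ofReal_add (by positivity) (by positivity)]
            exact hle
      _ ≤ 2*π*δ*Real.sqrt t + 4*Real.sqrt t := by
          apply add_le_add hA hB
      _ ≤ 20 * δ * Real.sqrt t := by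
          have e1 : π * (δ * Real.sqrt t) ≤ 3.15 * (δ * Real.sqrt t) :=
            mul_le_mul_of_nonneg_right Real.pi_lt_d2.le (by positivity)
          have e2 : (0:ℝ) ≤ (δ - 1) * Real.sqrt t :=
            mul_nonneg (by linarith) hst.le
          nlinarith
end

section
/- There exist constants ε₀ > 0 and c > 0 such that the following holds. Let an Ising instance on N variables have a graph of maximum degree at most d and satisfy ∑_j |J i j| ≤ J_max for every variable i. Let T₁ and T₂ be disjoint sets of variables and let V₀ be the set of variables outside T₁ ∪ T₂. Let 0 < ε ≤ ε₀ with |V₀| sufficiently large depending on ε, write D = ⌊(1/99)·ε^{−1}⌋, and suppose at least (98/99)·|V₀| of the variables in V₀ have degree at least D. Then there exists T ⊆ V₀ with |T| ≥ c·ε·|V₀| such that: (1) every i ∈ T has at most 99·ε·d neighbors inside T; (2) every i ∈ T has at least D variables j ∉ T with J i j ≠ 0 and |J i j| ≥ max_{k ∈ T} |J i k|; (3) to each i ∈ T one can assign a set E_i of exactly D variables j ∉ T with J i j ≠ 0 and |J i j| ≥ max_{k ∈ T} |J i k| (the 'strong edges' of i) in such a way that for every i ∈ T, the sum over neighbors j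 ∉ T of i of the number of indices k ∈ T with j ∈ E_k is at most 99·d; and (4) every i ∈ T satisfies ∑_{j ∈ T₁ ∪ T₂} |J i j| ≤ 99·J_max·(|T₁| + |T₂|)/|V₀|. -/
open Finset

/-- An assignment gives each variable the value `-1` or `1`. -/
def IsAssignment {N : ℕ} (S : Fin N → ℝ) : Prop := ∀ i, S i = -1 ∨ S i = 1

/-- Energy of an Ising instance: `H(S) = ∑ i, h i * S i + ∑_{i<j} J i j * S i * S j`. -/
noncomputable def energy {N : ℕ} (h : Fin N → ℝ) (J : Fin N → Fin N → ℝ)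
    (S : Fin N → ℝ) : ℝ :=
  ∑ i, h i * S i + ∑ i, ∑ j, if i < j then J i j * S i * S j else 0

/-- The assignment obtained from `S` by flipping the spin at `i`. -/
noncomputable def flipAt {N : ℕ} (S : Fin N → ℝ) (i : Fin N) : Fin N → ℝ :=
  Function.update S i (-(S i))

/-- A local minimum: flipping any single variable strictly increases the energy. -/
def IsingLocalMin {N : ℕ} (h : Fin N → ℝ) (J : Fin N → Fin N → ℝ) (S : Fin N → ℝ) : Prop :=
  IsAssignment S ∧ ∀ i, energy h J S < energy h J (flipAt S i)

/-- A global minimum: minimal energy among all assignments. -/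
def IsingGlobalMin {N : ℕ} (h : Fin N → ℝ) (J : Fin N → Fin N → ℝ) (S : Fin N → ℝ) : Prop :=
  IsAssignment S ∧ ∀ S', IsAssignment S' → energy h J S ≤ energy h J S'

/-- Degree of variable `i` in the graph of the instance: the number of `j ≠ i` with `J i j ≠ 0`. -/
noncomputable def degreeJ {N : ℕ} (J : Fin N → Fin N → ℝ) (i : Fin N) : ℕ :=
  Set.ncard {j | j ≠ i ∧ J i j ≠ 0}

open scoped Classical

lemma degreeJ_eq_card {N : ℕ} (J : Fin N → Fin N → ℝ) (i : Fin N) :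
    degreeJ J i = (Finset.univ.filter (fun j => j ≠ i ∧ J i j ≠ 0)).card := by
  rw [degreeJ, show {j | j ≠ i ∧ J i j ≠ 0}
      = ↑(Finset.univ.filter (fun j => j ≠ i ∧ J i j ≠ 0)) by ext x; simp]
  exact Set.ncard_coe_finset _

lemma exists_top {α : Type*} [DecidableEq α] (s : Finset α) (f : α → ℝ) (D : ℕ)
    (hD : D ≤ s.card) :
    ∃ t : Finset α, t ⊆ s ∧ t.card = D ∧ ∀ j ∈ t, ∀ k ∈ s, k ∉ t → f k ≤ f j := by
  obtain ⟨t0, ht0s, ht0c⟩ := Finset.exists_subset_card_eq hD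
  have hne : (s.powersetCard D).Nonempty := ⟨t0, Finset.mem_powersetCard.2 ⟨ht0s, ht0c⟩⟩
  obtain ⟨t, htmem, hmax⟩ :=
    Finset.exists_max_image (s.powersetCard D) (fun t => ∑ x ∈ t, f x) hne
  obtain ⟨hts, htc⟩ := Finset.mem_powersetCard.1 htmem
  refine ⟨t, hts, htc, ?_⟩
  intro j hj k hk hkt
  by_contra hlt
  push_neg at hlt
  have hkt' : k ∉ t.erase j := fun h => hkt (Finset.mem_of_mem_erase h)
  have hD1 : 0 < t.card := Finset.card_pos.2 ⟨j, hj⟩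
  have ht'mem : insert k (t.erase j) ∈ s.powersetCard D := by
    refine Finset.mem_powersetCard.2 ⟨?_, ?_⟩
    · exact Finset.insert_subset hk ((Finset.erase_subset j t).trans hts)
    · rw [Finset.card_insert_of_notMem hkt', Finset.card_erase_of_mem hj]
      omega
  have hsum : ∑ x ∈ insert k (t.erase j), f x = f k + (∑ x ∈ t, f x - f j) := by
    rw [Finset.sum_insert hkt', Finset.sum_erase_eq_sub hj]
  have := hmax _ ht'mem
  simp only [hsum] at this
  linarith

lemma biased_sum {α : Type*} [DecidableEq α] (p : ℝ) (s t : Finset α) (hts : t ⊆ s) :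
    ∑ A ∈ s.powerset, (if t ⊆ A then p ^ A.card * (1 - p) ^ (s.card - A.card) else 0)
      = p ^ t.card := by
  have key := Finset.prod_add (fun _ : α => p) (fun i => if i ∈ t then 0 else (1 - p)) s
  have hL : ∏ i ∈ s, ((fun _ : α => p) i + (if i ∈ t then 0 else (1 - p))) = p ^ t.card := by
    rw [← Finset.prod_sdiff hts]
    have h1 : ∏ i ∈ s \ t, ((fun _ : α => p) i + (if i ∈ t then 0 else (1 - p))) = 1 := by
      apply Finset.prod_eq_one
      intro i hi
      rw [if_neg (Finset.mem_sdiff.1 hi).2]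
      ring
    have h2 : ∏ i ∈ t, ((fun _ : α => p) i + (if i ∈ t then 0 else (1 - p))) = p ^ t.card := by
      rw [Finset.prod_congr rfl (fun i hi => by rw [if_pos hi]; ring : ∀ i ∈ t, _ = p)]
      exact Finset.prod_const p
    rw [h1, h2, one_mul]
  rw [hL] at key
  rw [key]
  apply Finset.sum_congr rfl
  intro A hA
  have hAs : A ⊆ s := Finset.mem_powerset.1 hA
  by_cases h : t ⊆ A
  · rw [if_pos h]
    have : ∏ i ∈ s \ A, (if i ∈ t then 0 else (1 - p)) = (1 - p) ^ (s.card - A.card) := by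
      rw [Finset.prod_congr rfl (fun i hi => ?_), Finset.prod_const, Finset.card_sdiff_of_subset hAs]
      rw [if_neg (fun hit => (Finset.mem_sdiff.1 hi).2 (h hit))]
    rw [this, Finset.prod_const]
  · rw [if_neg h]
    obtain ⟨x, hxt, hxA⟩ := Finset.not_subset.1 h
    have hx : x ∈ s \ A := Finset.mem_sdiff.2 ⟨hts hxt, hxA⟩
    rw [Finset.prod_eq_zero hx (by rw [if_pos hxt]), mul_zero]



set_option maxHeartbeats 2000000 in
/-- there are `ε₀, c > 0` such that for every `0 < ε ≤ ε₀` there is `n₀` so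
that the following holds. Given an Ising instance of maximum degree at most `d` with
`∑_j |J i j| ≤ J_max` for all `i`, disjoint sets `T₁, T₂` with complement `V₀` satisfying
`|V₀| ≥ n₀`, and such that at least `(98/99)·|V₀|` of the variables of `V₀` have degree at
least `D = ⌊(1/99)·ε⁻¹⌋`, there is `T ⊆ V₀` with `|T| ≥ c·ε·|V₀|` such that:
(1) every `i ∈ T` has at most `99·ε·d` neighbors inside `T`;
(2) every `i ∈ T` has at least `D` variables `j ∉ T` with `J i j ≠ 0` and
`|J i j| ≥ max_{k ∈ T} |J i k|`;
(3) each `i ∈ T` can be assigned a set `E i` of exactly `D` such variables ("strong edges")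
so that for every `i ∈ T` the sum, over neighbors `j ∉ T` of `i`, of the number of `k ∈ T`
with `j ∈ E k` is at most `99·d`;
(4) every `i ∈ T` satisfies `∑_{j ∈ T₁ ∪ T₂} |J i j| ≤ 99·J_max·(|T₁|+|T₂|)/|V₀|`. -/
theorem stmt19 :
    ∃ ε₀ c : ℝ, 0 < ε₀ ∧ 0 < c ∧
      ∀ ε : ℝ, 0 < ε → ε ≤ ε₀ →
        ∃ n₀ : ℕ,
          ∀ (N d : ℕ) (Jmax : ℝ) (h : Fin N → ℝ) (J : Fin N → Fin N → ℝ),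
            (∀ i j, J i j = J j i) → (∀ i, J i i = 0) →
            (∀ i, degreeJ J i ≤ d) →
            (∀ i, ∑ j, |J i j| ≤ Jmax) →
            ∀ T₁ T₂ : Finset (Fin N), Disjoint T₁ T₂ →
              n₀ ≤ ((T₁ ∪ T₂)ᶜ : Finset (Fin N)).card →
              ((98 : ℝ) / 99) * ((T₁ ∪ T₂)ᶜ : Finset (Fin N)).card ≤
                ((((T₁ ∪ T₂)ᶜ : Finset (Fin N)).filter
                  (fun i => ⌊ε⁻¹ / 99⌋₊ ≤ degreeJ J i)).card : ℝ) →
              ∃ T : Finset (Fin N), T ⊆ (T₁ ∪ T₂)ᶜ ∧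
                c * ε * ((T₁ ∪ T₂)ᶜ : Finset (Fin N)).card ≤ T.card ∧
                (∀ i ∈ T,
                  ((T.filter (fun j => j ≠ i ∧ J i j ≠ 0)).card : ℝ) ≤ 99 * ε * d) ∧
                (∀ i ∈ T,
                  ⌊ε⁻¹ / 99⌋₊ ≤ (univ.filter (fun j => j ∉ T ∧ J i j ≠ 0 ∧
                    ∀ k ∈ T, |J i k| ≤ |J i j|)).card) ∧
                (∃ E : Fin N → Finset (Fin N),
                  (∀ i ∈ T, (E i).card = ⌊ε⁻¹ / 99⌋₊ ∧
                    ∀ j ∈ E i, j ∉ T ∧ J i j ≠ 0 ∧ ∀ k ∈ T, |J i k| ≤ |J i j|) ∧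
                  ∀ i ∈ T,
                    ((∑ j ∈ univ.filter (fun j => j ∉ T ∧ j ≠ i ∧ J i j ≠ 0),
                        (T.filter (fun k => j ∈ E k)).card : ℕ) : ℝ) ≤ 99 * d) ∧
                ∀ i ∈ T, ∑ j ∈ T₁ ∪ T₂, |J i j| ≤
                  99 * Jmax * ((T₁.card : ℝ) + T₂.card) /
                    ((T₁ ∪ T₂)ᶜ : Finset (Fin N)).card := by
  refine ⟨1/1000, 1/2, by norm_num, by norm_num, ?_⟩
  intro ε hε hεub
  refine ⟨1, ?_⟩
  intro N d Jmax h J hsym hdiag hdeg hJmax T₁ T₂ hdisj hn hHDcard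
  set V₀ : Finset (Fin N) := (T₁ ∪ T₂)ᶜ with hV₀def
  set n : ℕ := V₀.card with hndef
  set D : ℕ := ⌊ε⁻¹ / 99⌋₊ with hDdef
  have hn1 : 1 ≤ n := hn
  have hnR : (1:ℝ) ≤ n := by exact_mod_cast hn1
  have hεinv : (1000 : ℝ) ≤ ε⁻¹ := by
    have h1 : ε⁻¹ * ε = 1 := inv_mul_cancel₀ hε.ne'
    nlinarith [inv_pos.2 hε]
  have hD10 : 10 ≤ D := Nat.le_floor (by push_cast; linarith)
  have hD1 : 1 ≤ D := by omega
  have hDr : (D:ℝ) ≤ ε⁻¹ / 99 := Nat.floor_le (by positivity)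
  set HD : Finset (Fin N) := V₀.filter (fun i => D ≤ degreeJ J i) with hHDdef
  have hHDne : HD.Nonempty := by
    rw [← Finset.card_pos]
    by_contra hc
    push_neg at hc
    interval_cases hcard : HD.card
    · simp [hcard] at hHDcard; linarith
  obtain ⟨i₀, hi₀⟩ := hHDne
  have hdeg_i₀ : D ≤ degreeJ J i₀ := (Finset.mem_filter.1 hi₀).2
  have hDd : D ≤ d := hdeg_i₀.trans (hdeg i₀)
  have hd1 : 1 ≤ d := hD1.trans hDd
  have hdR : (1:ℝ) ≤ d := by exact_mod_cast hd1
  have hJmaxpos : 0 < Jmax := by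
    have h1 : 0 < degreeJ J i₀ := hD1.trans hdeg_i₀
    rw [degreeJ_eq_card] at h1
    obtain ⟨j₀, hj₀⟩ := Finset.card_pos.1 h1
    have hj₀' := (Finset.mem_filter.1 hj₀).2
    have h3 : |J i₀ j₀| ≤ ∑ j, |J i₀ j| :=
      Finset.single_le_sum (f := fun j => |J i₀ j|) (fun j _ => abs_nonneg _) (Finset.mem_univ j₀)
    have h2 : 0 < |J i₀ j₀| := abs_pos.2 hj₀'.2
    linarith [hJmax i₀, h3]
  -- the interaction threshold
  set τ : ℝ := 99 * Jmax * ((T₁.card : ℝ) + T₂.card) / n with hτdef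
  set s : Finset (Fin N) := HD.filter (fun i => ∑ j ∈ T₁ ∪ T₂, |J i j| ≤ τ) with hsdef
  have hsHD : s ⊆ HD := Finset.filter_subset _ _
  have hsV₀ : s ⊆ V₀ := hsHD.trans (Finset.filter_subset _ _)
  have hBad : ((HD.filter (fun i => ¬ (∑ j ∈ T₁ ∪ T₂, |J i j| ≤ τ))).card : ℝ) ≤ n / 99 := by
    set Bad := HD.filter (fun i => ¬ (∑ j ∈ T₁ ∪ T₂, |J i j| ≤ τ)) with hBaddef
    by_cases hS : T₁ ∪ T₂ = ∅
    · have hT₁ : T₁ = ∅ := Finset.union_eq_empty.1 hS |>.1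
      have hT₂ : T₂ = ∅ := Finset.union_eq_empty.1 hS |>.2
      have : Bad = ∅ := by
        rw [hBaddef, Finset.filter_eq_empty_iff]
        intro i _
        rw [not_not, hS, hτdef, hT₁, hT₂]
        simp
      rw [this]
      simp
      positivity
    · have hUpos : 0 < ((T₁ ∪ T₂).card : ℝ) :=
        by exact_mod_cast Finset.card_pos.2 (Finset.nonempty_of_ne_empty hS)
      have hcardsum : ((T₁ ∪ T₂).card : ℝ) = (T₁.card : ℝ) + T₂.card := by
        rw [Finset.card_union_of_disjoint hdisj]; push_cast; ring
      have hτpos : 0 < τ := by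
        rw [hτdef, ← hcardsum]
        positivity
      have hsum_bound : ∑ i ∈ Bad, (∑ j ∈ T₁ ∪ T₂, |J i j|) ≤ Jmax * ((T₁ ∪ T₂).card : ℝ) := by
        calc ∑ i ∈ Bad, (∑ j ∈ T₁ ∪ T₂, |J i j|)
            ≤ ∑ i ∈ (univ : Finset (Fin N)), (∑ j ∈ T₁ ∪ T₂, |J i j|) :=
              Finset.sum_le_sum_of_subset_of_nonneg (Finset.subset_univ _)
                (fun i _ _ => Finset.sum_nonneg fun j _ => abs_nonneg _)
          _ = ∑ j ∈ T₁ ∪ T₂, ∑ i ∈ (univ : Finset (Fin N)), |J i j| := Finset.sum_comm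
          _ = ∑ j ∈ T₁ ∪ T₂, ∑ i ∈ (univ : Finset (Fin N)), |J j i| := by
              apply Finset.sum_congr rfl; intro j _
              apply Finset.sum_congr rfl; intro i _
              rw [hsym]
          _ ≤ ∑ j ∈ T₁ ∪ T₂, Jmax := Finset.sum_le_sum fun j _ => hJmax j
          _ = Jmax * ((T₁ ∪ T₂).card : ℝ) := by rw [Finset.sum_const, nsmul_eq_mul]; ring
      have hlower : (Bad.card : ℝ) * τ ≤ ∑ i ∈ Bad, (∑ j ∈ T₁ ∪ T₂, |J i j|) := by
        calc (Bad.card : ℝ) * τ = ∑ _i ∈ Bad, τ := by rw [Finset.sum_const, nsmul_eq_mul]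
          _ ≤ _ := Finset.sum_le_sum fun i hi =>
              le_of_lt (not_le.1 (Finset.mem_filter.1 hi).2)
      have hkey : (Bad.card : ℝ) * τ ≤ Jmax * ((T₁ ∪ T₂).card : ℝ) := hlower.trans hsum_bound
      rw [hτdef, ← hcardsum] at hkey
      have hnpos : (0:ℝ) < n := by linarith
      rw [le_div_iff₀ (by norm_num : (0:ℝ) < 99)]
      have hkey2 := mul_le_mul_of_nonneg_right hkey hnpos.le
      have hne : (n:ℝ) ≠ 0 := ne_of_gt hnpos
      field_simp at hkey2
      rw [hcardsum] at hUpos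
      nlinarith [mul_pos hJmaxpos hUpos, hkey2]
  have hscard : (97:ℝ)/99 * n ≤ s.card := by
    have hsplit := Finset.card_filter_add_card_filter_not
      (s := HD) (p := fun i => ∑ j ∈ T₁ ∪ T₂, |J i j| ≤ τ)
    have : (s.card : ℝ) + ((HD.filter (fun i => ¬ (∑ j ∈ T₁ ∪ T₂, |J i j| ≤ τ))).card : ℝ)
        = HD.card := by exact_mod_cast hsplit
    linarith [hHDcard, hBad]
  -- neighborhoods and top-D strong edge sets
  set Ni : Fin N → Finset (Fin N) :=
    fun i => univ.filter (fun j => j ≠ i ∧ J i j ≠ 0) with hNidef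
  have hNis : ∀ i ∈ s, D ≤ (Ni i).card := by
    intro i hi
    have := (Finset.mem_filter.1 (hsHD hi)).2
    rwa [degreeJ_eq_card] at this
  have hNid : ∀ i, ((Ni i).card : ℕ) ≤ d := by
    intro i
    rw [← degreeJ_eq_card]
    exact hdeg i
  have hTopEx : ∀ i : Fin N, ∃ t : Finset (Fin N), D ≤ (Ni i).card →
      t ⊆ Ni i ∧ t.card = D ∧ ∀ j ∈ t, ∀ k ∈ Ni i, k ∉ t → |J i k| ≤ |J i j| := by
    intro i
    by_cases hi : D ≤ (Ni i).card
    · obtain ⟨t, h1, h2, h3⟩ := exists_top (Ni i) (fun j => |J i j|) D hi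
      exact ⟨t, fun _ => ⟨h1, h2, h3⟩⟩
    · exact ⟨∅, fun hc => absurd hc hi⟩
  choose Top hTop using hTopEx
  have hTopsub : ∀ i ∈ s, Top i ⊆ Ni i := fun i hi => (hTop i (hNis i hi)).1
  have hTopcard : ∀ i ∈ s, (Top i).card = D := fun i hi => (hTop i (hNis i hi)).2.1
  have hTopmax : ∀ i ∈ s, ∀ j ∈ Top i, ∀ k ∈ Ni i, k ∉ Top i → |J i k| ≤ |J i j| :=
    fun i hi => (hTop i (hNis i hi)).2.2
  -- congestion counts
  set g : Fin N → Fin N → ℕ :=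
    fun i k => ((Top k).filter (fun x => x ≠ i ∧ J i x ≠ 0)).card with hgdef
  set coef : Fin N → Fin N → ℝ := fun i j =>
    (if J i j ≠ 0 then (99 * ε * (d:ℝ))⁻¹ else 0) + (if j ∈ Top i then 1 else 0)
      + (g i j : ℝ) / (98 * d) with hcoefdef
  have hdpos : (0:ℝ) < d := by linarith
  have hcoef0 : ∀ i j, 0 ≤ coef i j := by
    intro i j
    rw [hcoefdef]
    have h1 : (0:ℝ) ≤ (if J i j ≠ 0 then (99 * ε * (d:ℝ))⁻¹ else 0) := by
      split <;> positivity
    have h2 : (0:ℝ) ≤ (if j ∈ Top i then (1:ℝ) else 0) := by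
      split <;> norm_num
    have h3 : (0:ℝ) ≤ (g i j : ℝ) / (98 * d) :=
      div_nonneg (Nat.cast_nonneg _) (by positivity)
    dsimp only
    linarith
  -- the biased measure
  set w : Finset (Fin N) → ℝ := fun A => ε ^ A.card * (1 - ε) ^ (s.card - A.card) with hwdef
  have h1ε : (0:ℝ) < 1 - ε := by linarith
  have hwpos : ∀ A, 0 < w A := fun A => mul_pos (pow_pos hε _) (pow_pos h1ε _)
  have hw1 : ∑ A ∈ s.powerset, w A = 1 := by
    have := biased_sum ε s ∅ (Finset.empty_subset s)
    simpa [hwdef] using this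
  have hwi : ∀ i ∈ s, ∑ A ∈ s.powerset, (if i ∈ A then w A else 0) = ε := by
    intro i hi
    have hb := biased_sum ε s {i} (Finset.singleton_subset_iff.2 hi)
    rw [Finset.card_singleton, pow_one] at hb
    rw [← hb]
    apply Finset.sum_congr rfl; intro A _
    rw [hwdef]
    refine if_congr ?_ rfl rfl
    exact (Finset.singleton_subset_iff).symm
  have hwij : ∀ i ∈ s, ∀ j ∈ s, i ≠ j →
      ∑ A ∈ s.powerset, (if i ∈ A ∧ j ∈ A then w A else 0) = ε^2 := by
    intro i hi j hj hij
    have hsub : ({i, j} : Finset (Fin N)) ⊆ s := by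
      intro x hx; rcases Finset.mem_insert.1 hx with hx | hx
      · exact hx ▸ hi
      · exact (Finset.mem_singleton.1 hx) ▸ hj
    have hb := biased_sum ε s {i, j} hsub
    rw [Finset.card_pair hij] at hb
    rw [← hb]
    apply Finset.sum_congr rfl; intro A _
    rw [hwdef]
    refine if_congr ?_ rfl rfl
    rw [Finset.insert_subset_iff, Finset.singleton_subset_iff]
  -- penalties
  set pen : Fin N → Finset (Fin N) → ℝ :=
    fun i A => ∑ j ∈ s.erase i, (if j ∈ A then coef i j else 0) with hpendef
  set F : Finset (Fin N) → ℝ := fun A => ∑ i ∈ s, (if i ∈ A then 1 - pen i A else 0) with hFdef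
  have hpen0 : ∀ i A, 0 ≤ pen i A := by
    intro i A
    rw [hpendef]; dsimp only
    apply Finset.sum_nonneg; intro j _
    split
    · exact hcoef0 i j
    · exact le_refl 0
  have hterm : ∀ A, w A * F A =
      (∑ i ∈ s, (if i ∈ A then w A else 0))
      - ∑ i ∈ s, ∑ j ∈ s.erase i, (if i ∈ A ∧ j ∈ A then w A else 0) * coef i j := by
    intro A
    rw [hFdef]; dsimp only
    rw [Finset.mul_sum, ← Finset.sum_sub_distrib]
    apply Finset.sum_congr rfl
    intro i _
    by_cases hiA : i ∈ A
    · rw [if_pos hiA, if_pos hiA, hpendef]; dsimp only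
      have heq : ∀ j ∈ s.erase i,
          (if i ∈ A ∧ j ∈ A then w A else 0) * coef i j
            = w A * (if j ∈ A then coef i j else 0) := by
        intro j _
        by_cases hjA : j ∈ A
        · rw [if_pos ⟨hiA, hjA⟩, if_pos hjA, mul_comm]
        · rw [if_neg (fun hc => hjA hc.2), if_neg hjA, zero_mul, mul_zero]
      rw [Finset.sum_congr rfl heq, ← Finset.mul_sum]
      ring
    · rw [if_neg hiA, if_neg hiA, mul_zero]
      have heq : ∀ j ∈ s.erase i,
          (if i ∈ A ∧ j ∈ A then w A else 0) * coef i j = 0 := by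
        intro j _
        rw [if_neg (fun hc => hiA hc.1), zero_mul]
      rw [Finset.sum_congr rfl heq, Finset.sum_const_zero]
      ring
  have hEval : ∑ A ∈ s.powerset, w A * F A
      = ε * s.card - ∑ i ∈ s, ∑ j ∈ s.erase i, ε^2 * coef i j := by
    rw [Finset.sum_congr rfl (fun A _ => hterm A), Finset.sum_sub_distrib]
    congr 1
    · rw [Finset.sum_comm, Finset.sum_congr rfl hwi, Finset.sum_const, nsmul_eq_mul, mul_comm]
    · rw [Finset.sum_comm]
      apply Finset.sum_congr rfl
      intro i hi
      rw [Finset.sum_comm]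
      apply Finset.sum_congr rfl
      intro j hj
      rw [← Finset.sum_mul]
      congr 1
      exact hwij i hi j (Finset.mem_of_mem_erase hj) (Ne.symm (Finset.mem_erase.1 hj).1)
  -- bounding the total coefficient mass
  have hinv99 : ε⁻¹ / 99 = (99 * ε)⁻¹ := by
    rw [mul_inv]
    ring
  have hpart1 : ∀ i ∈ s, ∑ j ∈ s.erase i,
      (if J i j ≠ 0 then (99 * ε * (d:ℝ))⁻¹ else 0) ≤ (99 * ε)⁻¹ := by
    intro i hi
    rw [← Finset.sum_filter, Finset.sum_const, nsmul_eq_mul]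
    have hcard : ((((s.erase i).filter (fun j => J i j ≠ 0)).card : ℕ) : ℝ) ≤ d := by
      have hsub : (s.erase i).filter (fun j => J i j ≠ 0) ⊆ Ni i := by
        intro j hj
        have h1 := Finset.mem_filter.1 hj
        have h2 := Finset.mem_erase.1 h1.1
        exact Finset.mem_filter.2 ⟨Finset.mem_univ _, h2.1, h1.2⟩
      calc ((((s.erase i).filter (fun j => J i j ≠ 0)).card : ℕ) : ℝ)
          ≤ ((Ni i).card : ℝ) := by exact_mod_cast Finset.card_le_card hsub
        _ ≤ d := by exact_mod_cast hNid i
    calc ((((s.erase i).filter (fun j => J i j ≠ 0)).card : ℕ) : ℝ) * (99 * ε * d)⁻¹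
        ≤ (d : ℝ) * (99 * ε * d)⁻¹ :=
          mul_le_mul_of_nonneg_right hcard (by positivity)
      _ = (99 * ε)⁻¹ := by
          field_simp
  have hpart2 : ∀ i ∈ s, ∑ j ∈ s.erase i,
      (if j ∈ Top i then (1:ℝ) else 0) ≤ (99 * ε)⁻¹ := by
    intro i hi
    rw [← Finset.sum_filter, Finset.sum_const, nsmul_eq_mul, mul_one]
    have hsub : (s.erase i).filter (fun j => j ∈ Top i) ⊆ Top i :=
      fun j hj => (Finset.mem_filter.1 hj).2
    calc ((((s.erase i).filter (fun j => j ∈ Top i)).card : ℕ) : ℝ)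
        ≤ ((Top i).card : ℝ) := by exact_mod_cast Finset.card_le_card hsub
      _ = (D : ℝ) := by rw [hTopcard i hi]
      _ ≤ (99 * ε)⁻¹ := by rw [← hinv99]; exact hDr
  have hgsum : ∀ j ∈ s, ∑ i ∈ s, g i j ≤ D * d := by
    intro j hj
    have hstep : ∀ i, g i j = ∑ x ∈ Top j, (if x ≠ i ∧ J i x ≠ 0 then 1 else 0) := by
      intro i
      rw [hgdef]
      exact Finset.card_filter _ _
    calc ∑ i ∈ s, g i j = ∑ i ∈ s, ∑ x ∈ Top j, (if x ≠ i ∧ J i x ≠ 0 then 1 else 0) :=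
          Finset.sum_congr rfl (fun i _ => hstep i)
      _ = ∑ x ∈ Top j, ∑ i ∈ s, (if x ≠ i ∧ J i x ≠ 0 then 1 else 0) := Finset.sum_comm
      _ ≤ ∑ x ∈ Top j, d := by
          apply Finset.sum_le_sum
          intro x _
          rw [← Finset.card_filter]
          have hsub : s.filter (fun i => x ≠ i ∧ J i x ≠ 0) ⊆ Ni x := by
            intro i hi
            have h1 := (Finset.mem_filter.1 hi).2
            refine Finset.mem_filter.2 ⟨Finset.mem_univ _, h1.1.symm, ?_⟩
            rw [hsym x i]
            exact h1.2
          exact (Finset.card_le_card hsub).trans (hNid x)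
      _ = D * d := by rw [Finset.sum_const, hTopcard j hj, smul_eq_mul]
  have hgtotal : ∑ i ∈ s, ∑ j ∈ s.erase i, g i j ≤ s.card * (D * d) := by
    calc ∑ i ∈ s, ∑ j ∈ s.erase i, g i j
        ≤ ∑ i ∈ s, ∑ j ∈ s, g i j :=
          Finset.sum_le_sum fun i _ =>
            Finset.sum_le_sum_of_subset (Finset.erase_subset _ _)
      _ = ∑ j ∈ s, ∑ i ∈ s, g i j := Finset.sum_comm
      _ ≤ ∑ j ∈ s, D * d := Finset.sum_le_sum hgsum
      _ = s.card * (D * d) := by rw [Finset.sum_const, smul_eq_mul]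
  have hpart3 : ∑ i ∈ s, ∑ j ∈ s.erase i, (g i j : ℝ) / (98 * d)
      ≤ (s.card : ℝ) * (99 * ε)⁻¹ := by
    have hcast : ∑ i ∈ s, ∑ j ∈ s.erase i, (g i j : ℝ) / (98 * (d:ℝ))
        = ((∑ i ∈ s, ∑ j ∈ s.erase i, g i j : ℕ) : ℝ) / (98 * d) := by
      push_cast
      rw [Finset.sum_div]
      apply Finset.sum_congr rfl
      intro i _
      rw [Finset.sum_div]
    rw [hcast]
    have h1 : ((∑ i ∈ s, ∑ j ∈ s.erase i, g i j : ℕ) : ℝ) ≤ (s.card : ℝ) * (D * d) := by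
      exact_mod_cast hgtotal
    have h2 : ((∑ i ∈ s, ∑ j ∈ s.erase i, g i j : ℕ) : ℝ) / (98 * d)
        ≤ ((s.card : ℝ) * (D * d)) / (98 * d) :=
      div_le_div_of_nonneg_right h1 (by positivity) |>.trans_eq rfl
    refine h2.trans ?_
    have h3 : ((s.card : ℝ) * (D * d)) / (98 * d) = (s.card : ℝ) * ((D:ℝ) / 98) := by
      field_simp
    rw [h3]
    apply mul_le_mul_of_nonneg_left _ (Nat.cast_nonneg _)
    have : ((D:ℝ)) / 98 ≤ (D:ℝ) := by
      apply div_le_self (Nat.cast_nonneg _) (by norm_num)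
    refine this.trans ?_
    rw [← hinv99]
    exact hDr
  have hK : ∑ i ∈ s, ∑ j ∈ s.erase i, coef i j ≤ (s.card : ℝ) * (3 * (99 * ε)⁻¹) := by
    have hsplitc : ∀ i ∈ s, ∑ j ∈ s.erase i, coef i j
        = (∑ j ∈ s.erase i, (if J i j ≠ 0 then (99 * ε * (d:ℝ))⁻¹ else 0))
          + (∑ j ∈ s.erase i, (if j ∈ Top i then (1:ℝ) else 0))
          + (∑ j ∈ s.erase i, (g i j : ℝ) / (98 * d)) := by
      intro i _
      rw [← Finset.sum_add_distrib, ← Finset.sum_add_distrib]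
    rw [Finset.sum_congr rfl hsplitc, Finset.sum_add_distrib]
    have hA : ∑ i ∈ s, ((∑ j ∈ s.erase i, (if J i j ≠ 0 then (99 * ε * (d:ℝ))⁻¹ else 0))
        + (∑ j ∈ s.erase i, (if j ∈ Top i then (1:ℝ) else 0)))
        ≤ (s.card : ℝ) * ((99 * ε)⁻¹ + (99 * ε)⁻¹) := by
      calc _ ≤ ∑ _i ∈ s, ((99 * ε)⁻¹ + (99 * ε)⁻¹) :=
            Finset.sum_le_sum fun i hi => add_le_add (hpart1 i hi) (hpart2 i hi)
        _ = (s.card : ℝ) * ((99 * ε)⁻¹ + (99 * ε)⁻¹) := by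
            rw [Finset.sum_const, nsmul_eq_mul]
    have := add_le_add hA hpart3
    linarith
  -- choose a good sample A
  have hElow : (1:ℝ)/2 * ε * n ≤ ∑ A ∈ s.powerset, w A * F A := by
    rw [hEval]
    have hsum2 : ∑ i ∈ s, ∑ j ∈ s.erase i, ε^2 * coef i j
        = ε^2 * ∑ i ∈ s, ∑ j ∈ s.erase i, coef i j := by
      rw [Finset.mul_sum]
      apply Finset.sum_congr rfl
      intro i _
      rw [Finset.mul_sum]
    rw [hsum2]
    have h1 : ε^2 * (∑ i ∈ s, ∑ j ∈ s.erase i, coef i j)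
        ≤ ε^2 * ((s.card:ℝ) * (3 * (99*ε)⁻¹)) :=
      mul_le_mul_of_nonneg_left hK (by positivity)
    have h2 : ε^2 * ((s.card:ℝ) * (3 * (99*ε)⁻¹)) = ε * (s.card:ℝ) * (3/99) := by
      field_simp
    have h3 : ε * ((97:ℝ)/99 * n) ≤ ε * s.card := mul_le_mul_of_nonneg_left hscard hε.le
    nlinarith [h1, h2, h3, mul_pos hε (lt_of_lt_of_le zero_lt_one hnR)]
  obtain ⟨A, hAps, hFA⟩ : ∃ A ∈ s.powerset, (1:ℝ)/2 * ε * n ≤ F A := by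
    by_contra hno
    push_neg at hno
    have hlt : ∑ A ∈ s.powerset, w A * F A
        < ∑ A ∈ s.powerset, w A * ((1:ℝ)/2 * ε * n) := by
      apply Finset.sum_lt_sum_of_nonempty ⟨∅, Finset.empty_mem_powerset s⟩
      intro A hA
      exact mul_lt_mul_of_pos_left (hno A hA) (hwpos A)
    rw [← Finset.sum_mul, hw1, one_mul] at hlt
    linarith
  have hAs : A ⊆ s := Finset.mem_powerset.1 hAps
  set keep : Fin N → Prop := fun i =>
    (((A.filter (fun j => j ≠ i ∧ J i j ≠ 0)).card : ℝ) ≤ 99 * ε * d) ∧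
    (Top i ∩ A = ∅) ∧ ((∑ k ∈ A.erase i, g i k) ≤ 98 * d) with hkeepdef
  set T : Finset (Fin N) := A.filter keep with hTdef
  have hTA : T ⊆ A := Finset.filter_subset _ _
  have hTs : T ⊆ s := hTA.trans hAs
  have hTV₀ : T ⊆ V₀ := hTs.trans hsV₀
  have hkeepT : ∀ i ∈ T, keep i := fun i hi => (Finset.mem_filter.1 hi).2
  -- F A ≤ |T|
  have hFT : F A ≤ (T.card : ℝ) := by
    have hTcard : (T.card:ℝ) = ∑ i ∈ s, (if i ∈ T then (1:ℝ) else 0) := by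
      rw [← Finset.sum_filter, Finset.filter_mem_eq_inter,
        Finset.inter_eq_right.2 hTs, Finset.sum_const, nsmul_eq_mul, mul_one]
    rw [hTcard, hFdef]
    apply Finset.sum_le_sum
    intro i his
    by_cases hiA : i ∈ A
    · by_cases hiT : i ∈ T
      · rw [if_pos hiA, if_pos hiT]
        linarith [hpen0 i A]
      · rw [if_pos hiA, if_neg hiT]
        have hnk : ¬ keep i := fun hk => hiT (Finset.mem_filter.2 ⟨hiA, hk⟩)
        suffices hp : 1 ≤ pen i A by linarith
        -- split the penalty
        have hpsplit : pen i A =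
            (∑ j ∈ s.erase i, (if j ∈ A then
              (if J i j ≠ 0 then (99 * ε * (d:ℝ))⁻¹ else 0) else 0))
            + (∑ j ∈ s.erase i, (if j ∈ A then (if j ∈ Top i then (1:ℝ) else 0) else 0))
            + (∑ j ∈ s.erase i, (if j ∈ A then (g i j : ℝ) / (98 * d) else 0)) := by
          rw [hpendef]
          dsimp only
          rw [← Finset.sum_add_distrib, ← Finset.sum_add_distrib]
          apply Finset.sum_congr rfl
          intro j _
          by_cases hjA : j ∈ A
          · simp only [if_pos hjA]; rfl
          · simp only [if_neg hjA]; ring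
        have hP1nn : 0 ≤ ∑ j ∈ s.erase i, (if j ∈ A then
            (if J i j ≠ 0 then (99 * ε * (d:ℝ))⁻¹ else 0) else 0) := by
          apply Finset.sum_nonneg; intro j _
          split
          · split
            · positivity
            · exact le_refl 0
          · exact le_refl 0
        have hP2nn : 0 ≤ ∑ j ∈ s.erase i, (if j ∈ A then
            (if j ∈ Top i then (1:ℝ) else 0) else 0) := by
          apply Finset.sum_nonneg; intro j _
          split
          · split
            · norm_num
            · exact le_refl 0
          · exact le_refl 0
        have hP3nn : 0 ≤ ∑ j ∈ s.erase i, (if j ∈ A then (g i j : ℝ) / (98 * d) else 0) := by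
          apply Finset.sum_nonneg; intro j _
          split
          · exact div_nonneg (Nat.cast_nonneg _) (by positivity)
          · exact le_refl 0
        by_cases hc1 : ((A.filter (fun j => j ≠ i ∧ J i j ≠ 0)).card : ℝ) ≤ 99 * ε * d
        · by_cases hc2 : Top i ∩ A = ∅
          · by_cases hc3 : (∑ k ∈ A.erase i, g i k) ≤ 98 * d
            · exact absurd ⟨hc1, hc2, hc3⟩ hnk
            · -- congestion violated
              push_neg at hc3
              have hP3eq : (∑ j ∈ s.erase i, (if j ∈ A then (g i j : ℝ) / (98 * d) else 0))
                  = ((∑ k ∈ A.erase i, g i k : ℕ) : ℝ) / (98 * d) := by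
                rw [← Finset.sum_filter]
                have hseteq : (s.erase i).filter (fun j => j ∈ A) = A.erase i := by
                  apply Finset.ext; intro x
                  simp only [Finset.mem_filter, Finset.mem_erase]
                  constructor
                  · rintro ⟨⟨hxi, _⟩, hxA⟩; exact ⟨hxi, hxA⟩
                  · rintro ⟨hxi, hxA⟩; exact ⟨⟨hxi, hAs hxA⟩, hxA⟩
                rw [hseteq]
                push_cast
                rw [Finset.sum_div]
              have hgt : (98 * (d:ℝ)) < ((∑ k ∈ A.erase i, g i k : ℕ) : ℝ) := by
                exact_mod_cast hc3
              have h98 : (0:ℝ) < 98 * d := by positivity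
              have : (1:ℝ) < ((∑ k ∈ A.erase i, g i k : ℕ) : ℝ) / (98 * d) := by
                rw [lt_div_iff₀ h98, one_mul]
                exact hgt
              rw [hpsplit, hP3eq]
              linarith
          · -- Top i meets A
            obtain ⟨j₀, hj₀⟩ := Finset.nonempty_iff_ne_empty.2 hc2
            have hj₀T := (Finset.mem_inter.1 hj₀).1
            have hj₀A := (Finset.mem_inter.1 hj₀).2
            have hj₀Ni : j₀ ∈ Ni i := hTopsub i (hAs hiA) hj₀T
            have hj₀ne : j₀ ≠ i := (Finset.mem_filter.1 hj₀Ni).2.1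
            have hj₀se : j₀ ∈ s.erase i := Finset.mem_erase.2 ⟨hj₀ne, hAs hj₀A⟩
            have hP2ge : (1:ℝ) ≤ ∑ j ∈ s.erase i, (if j ∈ A then
                (if j ∈ Top i then (1:ℝ) else 0) else 0) := by
              have hle := Finset.single_le_sum
                (f := fun j => (if j ∈ A then (if j ∈ Top i then (1:ℝ) else 0) else 0))
                (fun j _ => by
                  split
                  · split
                    · norm_num
                    · exact le_refl 0
                  · exact le_refl 0) hj₀se
              simp only [if_pos hj₀A, if_pos hj₀T] at hle
              exact hle
            rw [hpsplit]
            linarith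
        · -- too many sampled neighbours
          push_neg at hc1
          have hP1eq : (∑ j ∈ s.erase i, (if j ∈ A then
              (if J i j ≠ 0 then (99 * ε * (d:ℝ))⁻¹ else 0) else 0))
              = ((A.filter (fun j => j ≠ i ∧ J i j ≠ 0)).card : ℝ) * (99 * ε * (d:ℝ))⁻¹ := by
            have hcong : ∀ j ∈ s.erase i, (if j ∈ A then
                (if J i j ≠ 0 then (99 * ε * (d:ℝ))⁻¹ else 0) else 0)
                = (if j ∈ A ∧ J i j ≠ 0 then (99 * ε * (d:ℝ))⁻¹ else 0) := by
              intro j _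
              by_cases hjA : j ∈ A
              · by_cases hJ : J i j ≠ 0
                · rw [if_pos hjA, if_pos hJ, if_pos ⟨hjA, hJ⟩]
                · rw [if_pos hjA, if_neg hJ, if_neg (fun hc => hJ hc.2)]
              · rw [if_neg hjA, if_neg (fun hc => hjA hc.1)]
            rw [Finset.sum_congr rfl hcong, ← Finset.sum_filter]
            have hseteq : (s.erase i).filter (fun j => j ∈ A ∧ J i j ≠ 0)
                = A.filter (fun j => j ≠ i ∧ J i j ≠ 0) := by
              apply Finset.ext; intro x
              simp only [Finset.mem_filter, Finset.mem_erase]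
              constructor
              · rintro ⟨⟨hxi, _⟩, hxA, hJ⟩; exact ⟨hxA, hxi, hJ⟩
              · rintro ⟨hxA, hxi, hJ⟩; exact ⟨⟨hxi, hAs hxA⟩, hxA, hJ⟩
            rw [hseteq, Finset.sum_const, nsmul_eq_mul]
          have hcinv : (0:ℝ) < (99 * ε * (d:ℝ))⁻¹ := by positivity
          have : (1:ℝ) < ((A.filter (fun j => j ≠ i ∧ J i j ≠ 0)).card : ℝ)
              * (99 * ε * (d:ℝ))⁻¹ := by
            have hmul : (99 * ε * (d:ℝ)) * (99 * ε * (d:ℝ))⁻¹ = 1 :=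
              mul_inv_cancel₀ (by positivity)
            nlinarith
          rw [hpsplit, hP1eq]
          linarith
    · have hiT : i ∉ T := fun hc => hiA (hTA hc)
      rw [if_neg hiA, if_neg hiT]
  have hTsize : (1:ℝ)/2 * ε * n ≤ (T.card : ℝ) := hFA.trans hFT
  -- strong-edge property
  have hstrong : ∀ i ∈ T, ∀ j ∈ Top i, j ∉ T ∧ J i j ≠ 0 ∧ ∀ k ∈ T, |J i k| ≤ |J i j| := by
    intro i hi j hj
    have his : i ∈ s := hTs hi
    have hk2 := (hkeepT i hi).2.1
    have hjNi : j ∈ Ni i := hTopsub i his hj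
    have hjA : j ∉ A := fun hc => by
      have hmem : j ∈ Top i ∩ A := Finset.mem_inter.2 ⟨hj, hc⟩
      rw [hk2] at hmem
      exact absurd hmem (Finset.notMem_empty j)
    refine ⟨fun hc => hjA (hTA hc), (Finset.mem_filter.1 hjNi).2.2, ?_⟩
    intro k hk
    by_cases hJk : J i k = 0
    · rw [hJk, abs_zero]; exact abs_nonneg _
    · have hkne : k ≠ i := fun he => hJk (he ▸ hdiag i)
      have hkNi : k ∈ Ni i := Finset.mem_filter.2 ⟨Finset.mem_univ _, hkne, hJk⟩
      have hkTop : k ∉ Top i := fun hc => by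
        have hmem : k ∈ Top i ∩ A := Finset.mem_inter.2 ⟨hc, hTA hk⟩
        rw [hk2] at hmem
        exact absurd hmem (Finset.notMem_empty k)
      exact hTopmax i his j hj k hkNi hkTop
  refine ⟨T, hTV₀, ?_, ?_, ?_, ?_, ?_⟩
  · -- size
    linarith [hTsize]
  · -- few neighbours inside T
    intro i hi
    have hk := (hkeepT i hi).1
    calc ((T.filter (fun j => j ≠ i ∧ J i j ≠ 0)).card : ℝ)
        ≤ ((A.filter (fun j => j ≠ i ∧ J i j ≠ 0)).card : ℝ) := by
          exact_mod_cast Finset.card_le_card (Finset.filter_subset_filter _ hTA)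
      _ ≤ 99 * ε * d := hk
  · -- many strong edges
    intro i hi
    have his : i ∈ s := hTs hi
    have hsub : Top i ⊆ univ.filter (fun j => j ∉ T ∧ J i j ≠ 0 ∧
        ∀ k ∈ T, |J i k| ≤ |J i j|) := by
      intro j hj
      obtain ⟨h1, h2, h3⟩ := hstrong i hi j hj
      exact Finset.mem_filter.2 ⟨Finset.mem_univ _, h1, h2, h3⟩
    calc D = (Top i).card := (hTopcard i his).symm
      _ ≤ _ := Finset.card_le_card hsub
  · -- the strong-edge assignment
    refine ⟨Top, fun i hi => ⟨hTopcard i (hTs hi), hstrong i hi⟩, ?_⟩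
    intro i hi
    have his : i ∈ s := hTs hi
    have hk3 := (hkeepT i hi).2.2
    have hstep : ∀ j ∈ univ.filter (fun j => j ∉ T ∧ j ≠ i ∧ J i j ≠ 0),
        (T.filter (fun k => j ∈ Top k)).card
        ≤ (if j ∈ Top i then 1 else 0) + ((A.erase i).filter (fun k => j ∈ Top k)).card := by
      intro j _
      by_cases hji : j ∈ Top i
      · rw [if_pos hji]
        have hsub2 : T.filter (fun k => j ∈ Top k)
            ⊆ insert i ((A.erase i).filter (fun k => j ∈ Top k)) := by
          intro k hk
          obtain ⟨hkT, hkTop⟩ := Finset.mem_filter.1 hk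
          by_cases hki : k = i
          · rw [hki]; exact Finset.mem_insert_self _ _
          · exact Finset.mem_insert_of_mem (Finset.mem_filter.2
              ⟨Finset.mem_erase.2 ⟨hki, hTA hkT⟩, hkTop⟩)
        calc (T.filter (fun k => j ∈ Top k)).card
            ≤ (insert i ((A.erase i).filter (fun k => j ∈ Top k))).card :=
              Finset.card_le_card hsub2
          _ ≤ ((A.erase i).filter (fun k => j ∈ Top k)).card + 1 :=
              Finset.card_insert_le _ _
          _ = 1 + ((A.erase i).filter (fun k => j ∈ Top k)).card := by omega
      · rw [if_neg hji, zero_add]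
        apply Finset.card_le_card
        intro k hk
        obtain ⟨hkT, hkTop⟩ := Finset.mem_filter.1 hk
        have hki : k ≠ i := fun he => hji (he ▸ hkTop)
        exact Finset.mem_filter.2 ⟨Finset.mem_erase.2 ⟨hki, hTA hkT⟩, hkTop⟩
    have hsum1 : ∑ j ∈ univ.filter (fun j => j ∉ T ∧ j ≠ i ∧ J i j ≠ 0),
        (if j ∈ Top i then 1 else 0) ≤ D := by
      rw [← Finset.card_filter]
      calc ((univ.filter (fun j => j ∉ T ∧ j ≠ i ∧ J i j ≠ 0)).filter
            (fun j => j ∈ Top i)).card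
          ≤ (Top i).card := Finset.card_le_card (fun x hx => (Finset.mem_filter.1 hx).2)
        _ = D := hTopcard i his
    have hsum2 : ∑ j ∈ univ.filter (fun j => j ∉ T ∧ j ≠ i ∧ J i j ≠ 0),
        ((A.erase i).filter (fun k => j ∈ Top k)).card ≤ ∑ k ∈ A.erase i, g i k := by
      calc ∑ j ∈ univ.filter (fun j => j ∉ T ∧ j ≠ i ∧ J i j ≠ 0),
            ((A.erase i).filter (fun k => j ∈ Top k)).card
          = ∑ j ∈ univ.filter (fun j => j ∉ T ∧ j ≠ i ∧ J i j ≠ 0),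
            ∑ k ∈ A.erase i, (if j ∈ Top k then 1 else 0) :=
            Finset.sum_congr rfl (fun j _ => Finset.card_filter _ _)
        _ = ∑ k ∈ A.erase i, ∑ j ∈ univ.filter (fun j => j ∉ T ∧ j ≠ i ∧ J i j ≠ 0),
            (if j ∈ Top k then 1 else 0) := Finset.sum_comm
        _ ≤ ∑ k ∈ A.erase i, g i k := by
            apply Finset.sum_le_sum
            intro k _
            rw [← Finset.card_filter]
            apply Finset.card_le_card
            intro x hx
            obtain ⟨hxfs, hxTop⟩ := Finset.mem_filter.1 hx
            have hx3 := (Finset.mem_filter.1 hxfs).2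
            exact Finset.mem_filter.2 ⟨hxTop, hx3.2.1, hx3.2.2⟩
    have htotal : (∑ j ∈ univ.filter (fun j => j ∉ T ∧ j ≠ i ∧ J i j ≠ 0),
        (T.filter (fun k => j ∈ Top k)).card) ≤ 99 * d := by
      calc ∑ j ∈ univ.filter (fun j => j ∉ T ∧ j ≠ i ∧ J i j ≠ 0),
            (T.filter (fun k => j ∈ Top k)).card
          ≤ ∑ j ∈ univ.filter (fun j => j ∉ T ∧ j ≠ i ∧ J i j ≠ 0),
            ((if j ∈ Top i then 1 else 0)
              + ((A.erase i).filter (fun k => j ∈ Top k)).card) :=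
            Finset.sum_le_sum hstep
        _ = (∑ j ∈ univ.filter (fun j => j ∉ T ∧ j ≠ i ∧ J i j ≠ 0),
              (if j ∈ Top i then 1 else 0))
            + ∑ j ∈ univ.filter (fun j => j ∉ T ∧ j ≠ i ∧ J i j ≠ 0),
              ((A.erase i).filter (fun k => j ∈ Top k)).card := Finset.sum_add_distrib
        _ ≤ D + 98 * d := add_le_add hsum1 (hsum2.trans hk3)
        _ ≤ 99 * d := by omega
    calc ((∑ j ∈ univ.filter (fun j => j ∉ T ∧ j ≠ i ∧ J i j ≠ 0),
          (T.filter (fun k => j ∈ Top k)).card : ℕ) : ℝ)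
        ≤ ((99 * d : ℕ) : ℝ) := by exact_mod_cast htotal
      _ = 99 * d := by push_cast; ring
  · -- small interaction with T₁ ∪ T₂
    intro i hi
    exact (Finset.mem_filter.1 (hTs hi)).2
end
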